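/- arXiv:1701.01800 — 6 statements merged into one kernel-verified Lean document; each statement's English description precedes it below -/
import Mathlib

section
/- Fix D ≥ 0 and ε, δ ∈ [0,1), and assume G^δ_{D,ε}(X) < +∞ (i.e., some channel P_{Y|X} satisfies Pr{d(X,Y) > D} ≤ ε). Then there exists a (D, R, ε, δ) code (with a possibly stochastic encoder) whose rate is R = ⌊G^δ_{D,ε}(X)⌋. -/
open scoped ENNReal
open MeasureTheory

noncomputable section

/-- The smooth max entropy `H^δ(P)` (base 2) of a probability distribution `P`
on a finite alphabet `𝒴`: the least `log₂ |𝒲|` over subsets `𝒲 ⊆ 𝒴` of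
probability at least `1 - δ`. -/
def smoothMaxEnt {𝒴 : Type} [Fintype 𝒴] (P : 𝒴 → ℝ≥0∞) (δ : ℝ) : ℝ :=
  sInf {r : ℝ | ∃ W : Finset 𝒴,
    ENNReal.ofReal (1 - δ) ≤ ∑ y ∈ W, P y ∧ r = Real.logb 2 (W.card)}

/-- A channel (conditional probability distribution) from `𝒳` to `𝒴`. -/
def IsChannel {𝒳 𝒴 : Type} [Fintype 𝒴] (W : 𝒳 → 𝒴 → ℝ≥0∞) : Prop :=
  ∀ x, ∑ y, W x y = 1

/-- The output marginal distribution of the channel `W` with input distribution `pX`. -/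
def marginal {𝒳 𝒴 : Type} [Fintype 𝒳] (pX : 𝒳 → ℝ≥0∞) (W : 𝒳 → 𝒴 → ℝ≥0∞) : 𝒴 → ℝ≥0∞ :=
  fun y => ∑ x, pX x * W x y

/-- `Pr{d(X,Y) > D}` for the joint law `pX · W`. -/
def chExcess {𝒳 𝒴 : Type} [Fintype 𝒳] [Fintype 𝒴] (pX : 𝒳 → ℝ≥0∞) (W : 𝒳 → 𝒴 → ℝ≥0∞)
    (d : 𝒳 → 𝒴 → ℝ) (D : ℝ) : ℝ≥0∞ :=
  ∑ x, ∑ y, if D < d x y then pX x * W x y else 0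

/-- The quantity `G^δ_{D,ε}(X)` as a value in `[0,∞]`: the infimum of the smooth max
entropy of the output marginal, over channels whose excess-distortion probability is
at most `ε`; it equals `+∞` if no such channel exists. -/
def Gq {𝒳 𝒴 : Type} [Fintype 𝒳] [Fintype 𝒴] (pX : 𝒳 → ℝ≥0∞) (d : 𝒳 → 𝒴 → ℝ)
    (D ε δ : ℝ) : ℝ≥0∞ :=
  ⨅ (W : 𝒳 → 𝒴 → ℝ≥0∞) (_ : IsChannel W) (_ : chExcess pX W d D ≤ ENNReal.ofReal ε),
    ENNReal.ofReal (smoothMaxEnt (marginal pX W) δ)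

/-- `(f, g)` is a `(D, R, ε, δ)` code: `f` is a (possibly stochastic) encoder assigning
to each source symbol a probability distribution on binary strings (`List Bool`),
`g` is a decoder, the excess distortion probability is at most `ε`, and the
overflow probability is at most `δ`. -/
def IsCode {𝒳 𝒴 : Type} [Fintype 𝒳] (pX : 𝒳 → ℝ≥0∞) (d : 𝒳 → 𝒴 → ℝ)
    (D R ε δ : ℝ) (f : 𝒳 → List Bool → ℝ≥0∞) (g : List Bool → 𝒴) : Prop :=
  (∀ x, ∑' w : List Bool, f x w = 1) ∧
  (∑ x, ∑' w : List Bool, (if D < d x (g w) then pX x * f x w else 0))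
      ≤ ENNReal.ofReal ε ∧
  (∑ x, ∑' w : List Bool, (if R < (w.length : ℝ) then pX x * f x w else 0))
      ≤ ENNReal.ofReal δ

/-- The deterministic encoder `f : 𝒳 → {0,1}*` viewed as a stochastic encoder. -/
def detEnc {𝒳 : Type} (f : 𝒳 → List Bool) : 𝒳 → List Bool → ℝ≥0∞ :=
  fun x w => if w = f x then 1 else 0

/-- The sum of the `j` largest values of `P`. -/
def topSum {𝒴 : Type} [Fintype 𝒴] (P : 𝒴 → ℝ≥0∞) (j : ℕ) : ℝ≥0∞ :=
  ⨆ (W : Finset 𝒴) (_ : W.card ≤ j), ∑ y ∈ W, P y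



-- ===== auxiliary material =====

def decStr (w : List Bool) : ℕ := w.foldr (fun b n => 2 * n + cond b 1 0) 1

def iotaStr : ℕ → List Bool
  | 0 => []
  | n + 1 => (n % 2 == 1) :: iotaStr (n / 2)
  decreasing_by exact Nat.lt_succ_of_le (Nat.div_le_self n 2)

lemma decStr_iotaStr (k : ℕ) : decStr (iotaStr k) = k + 1 := by
  induction k using Nat.strong_induction_on with
  | _ k ih =>
    match k with
    | 0 => rw [iotaStr]; rfl
    | n + 1 =>
      rw [iotaStr, decStr, List.foldr_cons]
      rw [show List.foldr (fun b n => 2 * n + cond b 1 0) 1 (iotaStr (n / 2))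
            = decStr (iotaStr (n / 2)) from rfl, ih (n / 2) (by omega)]
      rcases Nat.mod_two_eq_zero_or_one n with h2 | h2 <;> simp [h2] <;> omega

lemma iotaStr_injective : Function.Injective iotaStr := by
  intro a b h
  have ha := decStr_iotaStr a
  rw [h, decStr_iotaStr b] at ha
  omega

lemma pow_length_iotaStr (k : ℕ) : 2 ^ (iotaStr k).length ≤ k + 1 := by
  induction k using Nat.strong_induction_on with
  | _ k ih =>
    match k with
    | 0 => simp [iotaStr]
    | n + 1 =>
      rw [iotaStr]
      simp only [List.length_cons, pow_succ]
      have h := ih (n / 2) (by omega)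
      omega

lemma marginal_sum {𝒳 𝒴 : Type} [Fintype 𝒳] [Fintype 𝒴] (pX : 𝒳 → ℝ≥0∞)
    (W : 𝒳 → 𝒴 → ℝ≥0∞) (hpX : ∑ x, pX x = 1) (hW : IsChannel W) :
    ∑ y, marginal pX W y = 1 := by
  unfold marginal
  rw [Finset.sum_comm]
  calc ∑ x, ∑ y, pX x * W x y = ∑ x, pX x * ∑ y, W x y := by
        exact Finset.sum_congr rfl fun x _ => (Finset.mul_sum _ _ _).symm
    _ = ∑ x, pX x := Finset.sum_congr rfl fun x _ => by rw [hW x, mul_one]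
    _ = 1 := hpX

lemma smoothMaxEnt_attained {𝒴 : Type} [Fintype 𝒴] (P : 𝒴 → ℝ≥0∞) (δ : ℝ)
    (hP : ∑ y, P y = 1) (hδ : 0 ≤ δ) :
    ∃ W : Finset 𝒴, ENNReal.ofReal (1 - δ) ≤ ∑ y ∈ W, P y ∧
      smoothMaxEnt P δ = Real.logb 2 W.card := by
  classical
  set S := {r : ℝ | ∃ W : Finset 𝒴,
    ENNReal.ofReal (1 - δ) ≤ ∑ y ∈ W, P y ∧ r = Real.logb 2 (W.card)} with hS
  have hne : S.Nonempty := by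
    refine ⟨Real.logb 2 ((Finset.univ : Finset 𝒴).card), Finset.univ, ?_, rfl⟩
    rw [hP]
    exact ENNReal.ofReal_le_one.mpr (by linarith)
  have hfin : S.Finite := by
    apply Set.Finite.subset (Set.finite_range (fun W : Finset 𝒴 => Real.logb 2 (W.card)))
    rintro r ⟨W, _, rfl⟩
    exact ⟨W, rfl⟩
  have hmem : sInf S ∈ S := hne.csInf_mem hfin
  obtain ⟨W, h1, h2⟩ := hmem
  exact ⟨W, h1, h2⟩

lemma key_tsum {𝒳 𝒴 : Type} [Fintype 𝒴] (x : 𝒳) (W₀ : 𝒳 → 𝒴 → ℝ≥0∞)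
    (e : 𝒴 → List Bool) (c : List Bool → Prop) [DecidablePred c] (a : ℝ≥0∞) :
    (∑' w : List Bool, if c w then a * ∑ y, (if w = e y then W₀ x y else 0) else 0)
      = ∑ y, if c (e y) then a * W₀ x y else 0 := by
  have h1 : ∀ w : List Bool, (if c w then a * ∑ y, (if w = e y then W₀ x y else 0) else 0)
      = ∑ y, (if w = e y then (if c (e y) then a * W₀ x y else 0) else 0) := by
    intro w
    by_cases hc : c w
    · rw [if_pos hc, Finset.mul_sum]
      refine Finset.sum_congr rfl fun y _ => ?_
      by_cases hw : w = e y
      · subst hw; simp [hc]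
      · simp [hw]
    · rw [if_neg hc]
      refine (Finset.sum_eq_zero fun y _ => ?_).symm
      by_cases hw : w = e y
      · subst hw; simp [hc]
      · simp [hw]
  calc (∑' w : List Bool, if c w then a * ∑ y, (if w = e y then W₀ x y else 0) else 0)
      = ∑' w : List Bool, ∑ y, (if w = e y then (if c (e y) then a * W₀ x y else 0) else 0) :=
        tsum_congr h1
    _ = ∑ y, ∑' w : List Bool, (if w = e y then (if c (e y) then a * W₀ x y else 0) else 0) :=
        Summable.tsum_finsetSum (fun _ _ => ENNReal.summable)
    _ = ∑ y, if c (e y) then a * W₀ x y else 0 :=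
        Finset.sum_congr rfl fun y _ => tsum_ite_eq _ _

/-- Achievability with a possibly stochastic encoder: if `G^δ_{D,ε}(X) < ∞`, there is a
`(D, R, ε, δ)` code with rate `R = ⌊G^δ_{D,ε}(X)⌋`. -/
theorem stmt0 {𝒳 𝒴 : Type} [Fintype 𝒳] [Fintype 𝒴] [Nonempty 𝒳] [Nonempty 𝒴]
    (pX : 𝒳 → ℝ≥0∞) (hpX : ∑ x, pX x = 1)
    (d : 𝒳 → 𝒴 → ℝ) (hd : ∀ x y, 0 ≤ d x y)
    (D ε δ : ℝ) (hD : 0 ≤ D) (hε : 0 ≤ ε ∧ ε < 1) (hδ : 0 ≤ δ ∧ δ < 1)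
    (hG : Gq pX d D ε δ ≠ ⊤) :
    ∃ (f : 𝒳 → List Bool → ℝ≥0∞) (g : List Bool → 𝒴),
      IsCode pX d D ((⌊(Gq pX d D ε δ).toReal⌋ : ℤ) : ℝ) ε δ f g := by
  classical
  -- a valid channel exists
  have hex : ∃ W : 𝒳 → 𝒴 → ℝ≥0∞, IsChannel W ∧ chExcess pX W d D ≤ ENNReal.ofReal ε := by
    by_contra h
    exact hG (eq_top_iff.mpr (le_iInf fun W => le_iInf fun h1 => le_iInf fun h2 =>
      absurd ⟨W, h1, h2⟩ h))
  haveI hne : Nonempty {W : 𝒳 → 𝒴 → ℝ≥0∞ //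
      IsChannel W ∧ chExcess pX W d D ≤ ENNReal.ofReal ε} :=
    ⟨⟨hex.choose, hex.choose_spec⟩⟩
  set P : {W : 𝒳 → 𝒴 → ℝ≥0∞ //
      IsChannel W ∧ chExcess pX W d D ≤ ENNReal.ofReal ε} → ℝ≥0∞ :=
    fun p => ENNReal.ofReal (smoothMaxEnt (marginal pX p.1) δ) with hPdef
  have hfinr : (Set.range P).Finite := by
    apply Set.Finite.subset ((Set.finite_Iic (Fintype.card 𝒴)).image
      (fun n : ℕ => ENNReal.ofReal (Real.logb 2 n)))
    rintro v ⟨p, rfl⟩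
    obtain ⟨Wset, _, hent'⟩ := smoothMaxEnt_attained (marginal pX p.1) δ
      (marginal_sum pX p.1 hpX p.2.1) hδ.1
    exact ⟨Wset.card, Finset.card_le_univ Wset, by simp only [hPdef]; rw [hent']⟩
  obtain ⟨p₀, hp₀⟩ := (Set.range_nonempty P).csInf_mem hfinr
  have hsinf_le : sInf (Set.range P) ≤ Gq pX d D ε δ := by
    unfold Gq
    exact le_iInf fun W => le_iInf fun h1 => le_iInf fun h2 => sInf_le ⟨⟨W, h1, h2⟩, rfl⟩
  obtain ⟨W₀, hchan, hexc⟩ := p₀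
  obtain ⟨𝒲₀, hprob, hent⟩ := smoothMaxEnt_attained (marginal pX W₀) δ
    (marginal_sum pX W₀ hpX hchan) hδ.1
  have hle : ENNReal.ofReal (Real.logb 2 𝒲₀.card) ≤ Gq pX d D ε δ := by
    rw [← hent]
    calc ENNReal.ofReal (smoothMaxEnt (marginal pX W₀) δ)
        = P ⟨W₀, hchan, hexc⟩ := by rw [hPdef]
      _ = sInf (Set.range P) := hp₀
      _ ≤ _ := hsinf_le
  have hn₀pos : 0 < 𝒲₀.card := by
    rcases Finset.eq_empty_or_nonempty 𝒲₀ with hW | hW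
    · exfalso
      rw [hW, Finset.sum_empty] at hprob
      exact absurd hprob (not_le.mpr (ENNReal.ofReal_pos.mpr (by linarith [hδ.2])))
    · exact Finset.card_pos.mpr hW
  have hlogb_nonneg : 0 ≤ Real.logb 2 (𝒲₀.card : ℝ) :=
    Real.logb_nonneg (by norm_num) (by exact_mod_cast hn₀pos)
  have hlogb_le : Real.logb 2 (𝒲₀.card : ℝ) ≤ (Gq pX d D ε δ).toReal :=
    (ENNReal.ofReal_le_iff_le_toReal hG).mp hle
  set m : ℕ := (⌊(Gq pX d D ε δ).toReal⌋).toNat with hm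
  have hfloor : ((⌊(Gq pX d D ε δ).toReal⌋ : ℤ) : ℝ) = (m : ℝ) := by
    have h0 : ((m : ℕ) : ℤ) = ⌊(Gq pX d D ε δ).toReal⌋ := by
      rw [hm]; exact Int.toNat_of_nonneg (Int.floor_nonneg.mpr ENNReal.toReal_nonneg)
    rw [← h0]; push_cast; ring
  have hGlt : (Gq pX d D ε δ).toReal < (m : ℝ) + 1 := by
    have h := Int.lt_floor_add_one (Gq pX d D ε δ).toReal
    rw [← hfloor]
    push_cast at h ⊢
    linarith
  have hcard_lt : ((𝒲₀.card : ℕ) : ℝ) < 2 ^ (m + 1) := by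
    have h1 : Real.logb 2 (𝒲₀.card : ℝ) < (m : ℝ) + 1 := lt_of_le_of_lt hlogb_le hGlt
    calc ((𝒲₀.card : ℕ) : ℝ) = (2 : ℝ) ^ (Real.logb 2 (𝒲₀.card : ℝ)) :=
          (Real.rpow_logb (by norm_num) (by norm_num) (by exact_mod_cast hn₀pos)).symm
      _ < (2 : ℝ) ^ ((m : ℝ) + 1) := (Real.rpow_lt_rpow_left_iff (by norm_num)).mpr h1
      _ = 2 ^ (m + 1) := by
          rw [show ((m : ℝ) + 1) = ((m + 1 : ℕ) : ℝ) by push_cast; ring, Real.rpow_natCast]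
  have hcard_le : 𝒲₀.card ≤ 2 ^ (m + 1) - 1 := by
    have h2 : (𝒲₀.card : ℕ) < 2 ^ (m + 1) := by exact_mod_cast hcard_lt
    omega
  -- indexing of 𝒴
  set idx : 𝒴 → ℕ := fun y =>
    if h : y ∈ 𝒲₀ then ((𝒲₀.equivFin ⟨y, h⟩ : Fin 𝒲₀.card) : ℕ)
    else 𝒲₀.card + ((𝒲₀ᶜ.equivFin ⟨y, Finset.mem_compl.mpr h⟩ : Fin 𝒲₀ᶜ.card) : ℕ)
    with hidxdef
  have hidx_lt : ∀ y, y ∈ 𝒲₀ → idx y < 𝒲₀.card := by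
    intro y hy
    simp only [hidxdef, dif_pos hy]
    exact (𝒲₀.equivFin ⟨y, hy⟩).isLt
  have hidx_inj : Function.Injective idx := by
    intro a b hab
    by_cases ha : a ∈ 𝒲₀ <;> by_cases hb : b ∈ 𝒲₀ <;>
      simp only [hidxdef, dif_pos, dif_neg, ha, hb, not_false_iff] at hab
    · exact Subtype.mk_eq_mk.mp (𝒲₀.equivFin.injective (Fin.val_injective hab))
    · exact absurd hab (by have := (𝒲₀.equivFin ⟨a, ha⟩).isLt; omega)
    · exact absurd hab (by have := (𝒲₀.equivFin ⟨b, hb⟩).isLt; omega)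
    · have h' : ((𝒲₀ᶜ.equivFin ⟨a, Finset.mem_compl.mpr ha⟩ : Fin 𝒲₀ᶜ.card) : ℕ)
          = ((𝒲₀ᶜ.equivFin ⟨b, Finset.mem_compl.mpr hb⟩ : Fin 𝒲₀ᶜ.card) : ℕ) := by omega
      exact Subtype.mk_eq_mk.mp (𝒲₀ᶜ.equivFin.injective (Fin.val_injective h'))
  set e : 𝒴 → List Bool := fun y => iotaStr (idx y) with hedef
  have he_inj : Function.Injective e := fun a b hab =>
    hidx_inj (iotaStr_injective hab)
  have hlen : ∀ y ∈ 𝒲₀, (e y).length ≤ m := by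
    intro y hy
    have h1 := hidx_lt y hy
    have h2 : 2 ^ (e y).length ≤ idx y + 1 := pow_length_iotaStr (idx y)
    have h3 : 2 ^ (e y).length < 2 ^ (m + 1) := by omega
    have h4 : (e y).length < m + 1 := (Nat.pow_lt_pow_iff_right (by norm_num)).mp h3
    omega
  set g : List Bool → 𝒴 := fun w =>
    if h : ∃ y, e y = w then h.choose else Classical.arbitrary 𝒴 with hgdef
  have hg : ∀ y, g (e y) = y := by
    intro y
    have hex' : ∃ y', e y' = e y := ⟨y, rfl⟩
    simp only [hgdef, dif_pos hex']
    exact he_inj hex'.choose_spec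
  refine ⟨fun x w => ∑ y, if w = e y then W₀ x y else 0, g, ?_, ?_, ?_⟩
  · intro x
    rw [Summable.tsum_finsetSum (fun _ _ => ENNReal.summable)]
    simp only [tsum_ite_eq]
    exact hchan x
  · calc ∑ x, ∑' (w : List Bool),
          (if D < d x (g w) then pX x * ∑ y, (if w = e y then W₀ x y else 0) else 0)
        = ∑ x, ∑ y, (if D < d x y then pX x * W₀ x y else 0) := by
          refine Finset.sum_congr rfl fun x _ => ?_
          rw [key_tsum x W₀ e (fun w => D < d x (g w)) (pX x)]
          simp only [hg]
      _ ≤ ENNReal.ofReal ε := hexc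
  · rw [hfloor]
    calc ∑ x, ∑' (w : List Bool),
          (if (m : ℝ) < (w.length : ℝ) then pX x * ∑ y, (if w = e y then W₀ x y else 0) else 0)
        = ∑ x, ∑ y, (if (m : ℝ) < ((e y).length : ℝ) then pX x * W₀ x y else 0) :=
          Finset.sum_congr rfl fun x _ =>
            key_tsum x W₀ e (fun w => (m : ℝ) < (w.length : ℝ)) (pX x)
      _ ≤ ∑ x, ∑ y, (if y ∈ 𝒲₀ then 0 else pX x * W₀ x y) := by
          refine Finset.sum_le_sum fun x _ => Finset.sum_le_sum fun y _ => ?_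
          by_cases hy : y ∈ 𝒲₀
          · have hnl : ¬ ((m : ℝ) < ((e y).length : ℝ)) := by
              push_neg
              exact_mod_cast hlen y hy
            simp [hnl, hy]
          · rw [if_neg hy]
            split
            · exact le_rfl
            · exact zero_le
      _ = ∑ y ∈ 𝒲₀ᶜ, marginal pX W₀ y := by
          rw [Finset.sum_comm]
          have hpt : ∀ y, (∑ x, if y ∈ 𝒲₀ then 0 else pX x * W₀ x y)
              = (if y ∈ 𝒲₀ then 0 else marginal pX W₀ y) := by
            intro y
            by_cases hy : y ∈ 𝒲₀ <;> simp [hy, marginal]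
          rw [Finset.sum_congr rfl fun y _ => hpt y, Finset.sum_ite,
            Finset.sum_const_zero, zero_add]
          congr 1
          ext y
          simp
      _ ≤ ENNReal.ofReal δ := by
          have htot : ∑ y ∈ 𝒲₀, marginal pX W₀ y + ∑ y ∈ 𝒲₀ᶜ, marginal pX W₀ y = 1 := by
            rw [Finset.sum_add_sum_compl]
            exact marginal_sum pX W₀ hpX hchan
          have hadd : ∑ y ∈ 𝒲₀ᶜ, marginal pX W₀ y + ENNReal.ofReal (1 - δ)
              ≤ ENNReal.ofReal δ + ENNReal.ofReal (1 - δ) := by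
            rw [← ENNReal.ofReal_add hδ.1 (by linarith [hδ.2]),
              show δ + (1 - δ) = 1 by ring, ENNReal.ofReal_one]
            calc ∑ y ∈ 𝒲₀ᶜ, marginal pX W₀ y + ENNReal.ofReal (1 - δ)
                ≤ ∑ y ∈ 𝒲₀ᶜ, marginal pX W₀ y + ∑ y ∈ 𝒲₀, marginal pX W₀ y :=
                  add_le_add_right hprob _
              _ = 1 := by rw [add_comm]; exact htot
          exact (ENNReal.add_le_add_iff_right ENNReal.ofReal_ne_top).mp hadd

end
end

section
/- Fix D ≥ 0 and ε, δ ∈ [0,1), and assume G^δ_{D,ε}(X) < +∞. Then every (D, R, ε, δ) code (with a possibly stochastic encoder) satisfies R > G^δ_{D,ε}(X) − 1. -/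
open scoped ENNReal
open MeasureTheory

noncomputable section

/-- Converse: if `G^δ_{D,ε}(X) < ∞`, every `(D, R, ε, δ)` code (possibly with a
stochastic encoder) satisfies `R > G^δ_{D,ε}(X) - 1`. -/
theorem stmt1 {𝒳 𝒴 : Type} [Fintype 𝒳] [Fintype 𝒴] [Nonempty 𝒳] [Nonempty 𝒴]
    (pX : 𝒳 → ℝ≥0∞) (hpX : ∑ x, pX x = 1)
    (d : 𝒳 → 𝒴 → ℝ) (hd : ∀ x y, 0 ≤ d x y)
    (D ε δ : ℝ) (hD : 0 ≤ D) (hε : 0 ≤ ε ∧ ε < 1) (hδ : 0 ≤ δ ∧ δ < 1)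
    (hG : Gq pX d D ε δ ≠ ⊤)
    (R : ℝ) (hR : 0 ≤ R) (f : 𝒳 → List Bool → ℝ≥0∞) (g : List Bool → 𝒴)
    (hcode : IsCode pX d D R ε δ f g) :
    (Gq pX d D ε δ).toReal - 1 < R := by
  classical
  obtain ⟨hnorm, hexc, hovf⟩ := hcode
  set n := ⌊R⌋₊ with hn
  -- the finset of all binary strings of length ≤ n
  set S : Finset (List Bool) :=
    (Finset.range (n+1)).biUnion
      (fun k => (Finset.univ : Finset (Fin k → Bool)).image (fun v => List.ofFn v)) with hS
  have hmemS : ∀ w : List Bool, ¬ (R < (w.length : ℝ)) → w ∈ S := by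
    intro w hw
    push_neg at hw
    have hlen : w.length ≤ n := Nat.le_floor hw
    refine Finset.mem_biUnion.2 ⟨w.length, Finset.mem_range.2 (Nat.lt_succ_of_le hlen), ?_⟩
    exact Finset.mem_image.2 ⟨w.get, Finset.mem_univ _, List.ofFn_get w⟩
  have hcardS : S.card < 2 ^ (n+1) := by
    calc S.card ≤ ∑ k ∈ Finset.range (n+1), 2 ^ k := by
          refine Finset.card_biUnion_le.trans (Finset.sum_le_sum fun k _ => ?_)
          calc ((Finset.univ : Finset (Fin k → Bool)).image (fun v => List.ofFn v)).card
              ≤ (Finset.univ : Finset (Fin k → Bool)).card := Finset.card_image_le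
            _ = 2 ^ k := by simp
      _ < 2 ^ (n+1) := Nat.geomSum_lt le_rfl (fun k hk => Finset.mem_range.1 hk)
  -- the induced channel
  set W : 𝒳 → 𝒴 → ℝ≥0∞ :=
    fun x y => ∑' w : List Bool, if g w = y then f x w else 0 with hWdef
  have hmul : ∀ x y, pX x * W x y
      = ∑' w : List Bool, (if g w = y then pX x * f x w else 0) := by
    intro x y
    simp only [hWdef]
    rw [← ENNReal.tsum_mul_left]
    congr 1; funext w
    by_cases h : g w = y <;> simp [h]
  have hch : IsChannel W := by
    intro x
    simp only [hWdef]
    rw [← hnorm x, ← Summable.tsum_finsetSum (fun y _ => ENNReal.summable)]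
    congr 1; funext w
    simp [Finset.sum_ite_eq]
  -- excess distortion of the channel equals that of the code
  have hexc' : chExcess pX W d D ≤ ENNReal.ofReal ε := by
    refine le_trans (le_of_eq ?_) hexc
    unfold chExcess
    refine Finset.sum_congr rfl fun x _ => ?_
    have key : ∀ y : 𝒴, (if D < d x y then pX x * W x y else 0)
        = ∑' w : List Bool,
            (if g w = y then (if D < d x (g w) then pX x * f x w else 0) else 0) := by
      intro y
      by_cases h : D < d x y
      · rw [if_pos h, hmul x y]
        congr 1; funext w
        by_cases hg : g w = y
        · subst hg; simp [h]
        · simp [hg]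
      · rw [if_neg h]
        symm
        refine ENNReal.summable.tsum_eq_zero_iff |>.2 fun w => ?_
        by_cases hg : g w = y
        · subst hg; simp [h]
        · simp [hg]
    rw [Finset.sum_congr rfl fun y _ => key y]
    rw [← Summable.tsum_finsetSum (fun y _ => ENNReal.summable)]
    congr 1; funext w
    simp [Finset.sum_ite_eq]
  -- the "good" part of the code mass
  set A : ℝ≥0∞ :=
    ∑ x, ∑' w : List Bool, (if R < (w.length : ℝ) then 0 else pX x * f x w) with hA
  have hsplit : A + (∑ x, ∑' w : List Bool,
      (if R < (w.length : ℝ) then pX x * f x w else 0)) = 1 := by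
    rw [hA, ← Finset.sum_add_distrib, ← hpX]
    refine Finset.sum_congr rfl fun x _ => ?_
    rw [← ENNReal.tsum_add]
    have heach : ∀ w : List Bool,
        (if R < (w.length : ℝ) then 0 else pX x * f x w)
          + (if R < (w.length : ℝ) then pX x * f x w else 0) = pX x * f x w := by
      intro w; by_cases h : R < (w.length : ℝ) <;> simp [h]
    rw [tsum_congr heach, ENNReal.tsum_mul_left, hnorm x, mul_one]
  have hAge : ENNReal.ofReal (1 - δ) ≤ A := by
    have h1 : ENNReal.ofReal (1 - δ) + ENNReal.ofReal δ = 1 := by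
      rw [← ENNReal.ofReal_add (by linarith [hδ.2]) hδ.1]
      norm_num
    have h2 : ENNReal.ofReal (1 - δ) + ENNReal.ofReal δ ≤ A + ENNReal.ofReal δ := by
      rw [h1, ← hsplit]
      exact add_le_add_right hovf A
    exact (ENNReal.add_le_add_iff_right ENNReal.ofReal_ne_top).1 h2
  -- the witness output set
  set Y : Finset 𝒴 := S.image g with hY
  have hYprob : ENNReal.ofReal (1 - δ) ≤ ∑ y ∈ Y, marginal pX W y := by
    refine hAge.trans ?_
    unfold marginal
    rw [Finset.sum_comm]
    refine Finset.sum_le_sum fun x _ => ?_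
    calc (∑' w : List Bool, (if R < (w.length : ℝ) then 0 else pX x * f x w))
        ≤ ∑' w : List Bool, (if g w ∈ Y then pX x * f x w else 0) := by
          refine ENNReal.tsum_le_tsum fun w => ?_
          by_cases h : R < (w.length : ℝ)
          · simp [h]
          · have hmem : g w ∈ Y := Finset.mem_image_of_mem g (hmemS w h)
            simp [h, hmem]
      _ = ∑ y ∈ Y, pX x * W x y := by
          rw [Finset.sum_congr rfl (fun y _ => hmul x y)]
          rw [← Summable.tsum_finsetSum (fun y _ => ENNReal.summable)]
          congr 1; funext w
          by_cases h : g w ∈ Y <;> simp [Finset.sum_ite_eq, h]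
  -- smooth max entropy bounds
  have hposδ : (0:ℝ≥0∞) < ENNReal.ofReal (1 - δ) := by
    rw [ENNReal.ofReal_pos]; linarith [hδ.2]
  have hcardpos : ∀ Y' : Finset 𝒴,
      ENNReal.ofReal (1 - δ) ≤ ∑ y ∈ Y', marginal pX W y → (1 : ℝ) ≤ Y'.card := by
    intro Y' h
    have hne : Y'.Nonempty := by
      rcases Y'.eq_empty_or_nonempty with hEm | hNE
      · exfalso
        rw [hEm, Finset.sum_empty] at h
        exact (ne_of_gt hposδ) (le_antisymm h zero_le')
      · exact hNE
    exact_mod_cast Nat.one_le_iff_ne_zero.2 (Finset.card_ne_zero_of_mem hne.choose_spec)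
  set E : Set ℝ := {r : ℝ | ∃ W' : Finset 𝒴,
    ENNReal.ofReal (1 - δ) ≤ ∑ y ∈ W', marginal pX W y ∧ r = Real.logb 2 (W'.card)} with hE
  have hEmem : Real.logb 2 (Y.card) ∈ E := ⟨Y, hYprob, rfl⟩
  have hEbdd : BddBelow E := by
    refine ⟨0, fun r hr => ?_⟩
    obtain ⟨Y', hY', hr⟩ := hr
    rw [hr]
    exact Real.logb_nonneg one_lt_two (hcardpos Y' hY')
  have hsle : smoothMaxEnt (marginal pX W) δ ≤ Real.logb 2 (Y.card) := csInf_le hEbdd hEmem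
  have hsnn : 0 ≤ smoothMaxEnt (marginal pX W) δ := by
    refine le_csInf ⟨_, hEmem⟩ fun r hr => ?_
    obtain ⟨Y', hY', hr⟩ := hr
    rw [hr]
    exact Real.logb_nonneg one_lt_two (hcardpos Y' hY')
  -- bound on log of the card
  have hYcard : (Y.card : ℝ) < 2 ^ ((n:ℝ) + 1) := by
    have h1 : Y.card ≤ S.card := Finset.card_image_le
    have h2 : Y.card < 2 ^ (n+1) := lt_of_le_of_lt h1 hcardS
    have h3 : (Y.card : ℝ) < (2:ℝ) ^ (n+1) := by exact_mod_cast h2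
    calc (Y.card : ℝ) < (2:ℝ) ^ (n+1) := h3
      _ = 2 ^ ((n:ℝ) + 1) := by
          rw [← Real.rpow_natCast 2 (n+1)]; push_cast; ring_nf
  have hlog : Real.logb 2 (Y.card) < (n:ℝ) + 1 := by
    have hYpos : (0:ℝ) < Y.card := lt_of_lt_of_le one_pos (hcardpos Y hYprob)
    exact (Real.logb_lt_iff_lt_rpow one_lt_two hYpos).2 hYcard
  -- conclude
  have hGle : Gq pX d D ε δ ≤ ENNReal.ofReal (smoothMaxEnt (marginal pX W) δ) := by
    unfold Gq
    exact iInf_le_of_le W (iInf_le_of_le hch (iInf_le_of_le hexc' le_rfl))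
  have htr : (Gq pX d D ε δ).toReal ≤ smoothMaxEnt (marginal pX W) δ := by
    have h4 := ENNReal.toReal_mono ENNReal.ofReal_ne_top hGle
    rwa [ENNReal.toReal_ofReal hsnn] at h4
  have hnR : (n:ℝ) ≤ R := Nat.floor_le hR
  linarith

end
end

section
/- Fix D ≥ 0 and ε, δ ∈ [0,1), and assume G^δ_{D,ε}(X) < +∞. Then G^δ_{D,ε}(X) − 1 < R*(D, ε, δ) ≤ ⌊G^δ_{D,ε}(X)⌋. -/
open scoped ENNReal
open MeasureTheory

noncomputable section

def dec : List Bool → ℕ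
  | [] => 0
  | b :: w => 2 * dec w + (cond b 1 0) + 1

def enc : ℕ → List Bool
  | 0 => []
  | (n+1) => (n % 2 == 1) :: enc (n / 2)
decreasing_by exact Nat.lt_succ_of_le (Nat.div_le_self n 2)

lemma dec_enc : ∀ n, dec (enc n) = n := by
  intro n
  induction n using Nat.strong_induction_on with
  | _ n ih =>
    match n with
    | 0 => simp [enc, dec]
    | (m+1) =>
      rw [enc, dec, ih (m / 2) (Nat.lt_succ_of_le (Nat.div_le_self m 2))]
      rcases Nat.mod_two_eq_zero_or_one m with h | h <;> simp [h] <;> omega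

lemma enc_inj : Function.Injective enc := by
  intro a b h
  have := dec_enc a
  rw [h, dec_enc] at this
  omega

lemma dec_bound : ∀ w : List Bool, dec w + 2 ≤ 2 ^ (w.length + 1) := by
  intro w
  induction w with
  | nil => simp [dec]
  | cons b t ih =>
    simp only [dec, List.length_cons]
    have : (cond b 1 0 : ℕ) ≤ 1 := by cases b <;> simp
    have h2 : (2:ℕ) ^ (t.length + 1 + 1) = 2 * 2 ^ (t.length + 1) := by ring
    omega

lemma enc_len : ∀ n k : ℕ, n + 2 ≤ 2 ^ (k + 1) → (enc n).length ≤ k := by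
  intro n
  induction n using Nat.strong_induction_on with
  | _ n ih =>
    intro k hk
    match n with
    | 0 => simp [enc]
    | (m+1) =>
      rw [enc]
      match k with
      | 0 =>
        exfalso
        have : (2:ℕ)^(0+1) = 2 := by norm_num
        omega
      | (j+1) =>
        simp only [List.length_cons]
        have h2 : (2:ℕ) ^ (j + 1 + 1) = 2 * 2 ^ (j+1) := by ring
        have := ih (m / 2) (Nat.lt_succ_of_le (Nat.div_le_self m 2)) j (by omega)
        omega

lemma dec_inj : Function.Injective dec := by
  intro a
  induction a with
  | nil =>
    intro b h
    cases b with
    | nil => rfl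
    | cons c t => simp [dec] at h
  | cons c t ih =>
    intro b h
    cases b with
    | nil => simp [dec] at h
    | cons c' t' =>
      simp only [dec] at h
      have hc : c = c' := by
        cases c <;> cases c' <;> simp at h ⊢ <;> omega
      subst hc
      have : dec t = dec t' := by cases c <;> simp at h <;> omega
      rw [ih this]

def symIdx {𝒴 : Type} [Fintype 𝒴] [DecidableEq 𝒴] (𝒲 : Finset 𝒴) (y : 𝒴) : ℕ :=
  if h : y ∈ 𝒲 then (𝒲.equivFin ⟨y, h⟩ : ℕ)
  else 𝒲.card + ((𝒲ᶜ).equivFin ⟨y, by simp [h]⟩ : ℕ)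

lemma symIdx_lt {𝒴 : Type} [Fintype 𝒴] [DecidableEq 𝒴] (𝒲 : Finset 𝒴) {y : 𝒴} (h : y ∈ 𝒲) :
    symIdx 𝒲 y < 𝒲.card := by
  rw [symIdx, dif_pos h]
  exact (𝒲.equivFin ⟨y, h⟩).isLt

lemma symIdx_inj {𝒴 : Type} [Fintype 𝒴] [DecidableEq 𝒴] (𝒲 : Finset 𝒴) :
    Function.Injective (symIdx 𝒲) := by
  intro a b h
  unfold symIdx at h
  by_cases ha : a ∈ 𝒲 <;> by_cases hb : b ∈ 𝒲
  · rw [dif_pos ha, dif_pos hb] at h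
    have := 𝒲.equivFin.injective (Fin.val_injective h)
    exact Subtype.mk_eq_mk.mp this
  · rw [dif_pos ha, dif_neg hb] at h
    have := (𝒲.equivFin ⟨a, ha⟩).isLt
    omega
  · rw [dif_neg ha, dif_pos hb] at h
    have := (𝒲.equivFin ⟨b, hb⟩).isLt
    omega
  · rw [dif_neg ha, dif_neg hb] at h
    have h2 : ((𝒲ᶜ).equivFin ⟨a, by simp [ha]⟩ : ℕ) = ((𝒲ᶜ).equivFin ⟨b, by simp [hb]⟩ : ℕ) := by omega
    have := (𝒲ᶜ).equivFin.injective (Fin.val_injective h2)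
    exact Subtype.mk_eq_mk.mp this



lemma marg_sum_one {𝒳 𝒴 : Type} [Fintype 𝒳] [Fintype 𝒴]
    (pX : 𝒳 → ℝ≥0∞) (hpX : ∑ x, pX x = 1)
    (W : 𝒳 → 𝒴 → ℝ≥0∞) (hW : IsChannel W) :
    ∑ y, marginal pX W y = 1 := by
  unfold marginal
  rw [Finset.sum_comm]
  calc ∑ x, ∑ y, pX x * W x y = ∑ x, pX x * ∑ y, W x y := by
        refine Finset.sum_congr rfl fun x _ => (Finset.mul_sum _ _ _).symm
    _ = 1 := by
        have h : ∀ x ∈ Finset.univ, pX x * ∑ y, W x y = pX x := fun x _ => by rw [hW x, mul_one]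
        rw [Finset.sum_congr rfl h, hpX]

lemma achieve {𝒳 𝒴 : Type} [Fintype 𝒳] [Fintype 𝒴] [Nonempty 𝒴] [DecidableEq 𝒴]
    (pX : 𝒳 → ℝ≥0∞) (hpX : ∑ x, pX x = 1)
    (d : 𝒳 → 𝒴 → ℝ) (D ε δ : ℝ) (hδ0 : 0 ≤ δ) (hδ1 : δ ≤ 1)
    (W : 𝒳 → 𝒴 → ℝ≥0∞) (hW : IsChannel W) (hexc : chExcess pX W d D ≤ ENNReal.ofReal ε)
    (𝒲 : Finset 𝒴) (hmass : ENNReal.ofReal (1 - δ) ≤ ∑ y ∈ 𝒲, marginal pX W y)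
    (k : ℕ) (hcard : 𝒲.card + 1 ≤ 2 ^ (k + 1)) :
    ∃ (f : 𝒳 → List Bool → ℝ≥0∞) (g : List Bool → 𝒴),
      IsCode pX d D (k : ℝ) ε δ f g := by
  classical
  set E : 𝒴 → List Bool := fun y => enc (symIdx 𝒲 y) with hE
  have hEinj : Function.Injective E := fun a b h => symIdx_inj 𝒲 (enc_inj h)
  set g : List Bool → 𝒴 :=
    fun w => if h : ∃ y, E y = w then h.choose else Classical.arbitrary 𝒴 with hg
  have hgE : ∀ y, g (E y) = y := by
    intro y
    have hex : ∃ y', E y' = E y := ⟨y, rfl⟩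
    rw [hg]
    simp only [dif_pos hex]
    exact hEinj hex.choose_spec
  set f : 𝒳 → List Bool → ℝ≥0∞ := fun x w => ∑ y, if w = E y then W x y else 0 with hf
  have key : ∀ (x : 𝒳) (c : List Bool → Prop) (_ : DecidablePred c),
      ∑' w : List Bool, (if c w then pX x * f x w else 0)
        = ∑ y, (if c (E y) then pX x * W x y else 0) := by
    intro x c hdc
    calc ∑' w : List Bool, (if c w then pX x * f x w else 0)
        = ∑' w : List Bool, ∑ y, (if w = E y then (if c w then pX x * W x y else 0) else 0) := by
          refine tsum_congr fun w => ?_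
          by_cases hc : c w
          · simp only [if_pos hc, hf, Finset.mul_sum, mul_ite, mul_zero]
          · simp [hc]
      _ = ∑ y, ∑' w : List Bool, (if w = E y then (if c w then pX x * W x y else 0) else 0) :=
          Summable.tsum_finsetSum (fun _ _ => ENNReal.summable)
      _ = ∑ y, (if c (E y) then pX x * W x y else 0) := by
          refine Finset.sum_congr rfl fun y _ => ?_
          rw [tsum_eq_single (E y) (fun w hw => if_neg hw)]
          simp
  refine ⟨f, g, ?_, ?_, ?_⟩
  · intro x
    rw [hf]
    rw [Summable.tsum_finsetSum (fun _ _ => ENNReal.summable)]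
    calc ∑ y, ∑' w : List Bool, (if w = E y then W x y else 0)
        = ∑ y, W x y := Finset.sum_congr rfl fun y _ => tsum_ite_eq (E y) (fun _ => W x y)
      _ = 1 := hW x
  · calc ∑ x, ∑' w : List Bool, (if D < d x (g w) then pX x * f x w else 0)
        = ∑ x, ∑ y, (if D < d x y then pX x * W x y else 0) := by
          refine Finset.sum_congr rfl fun x _ => ?_
          have h := key x (fun w => D < d x (g w)) inferInstance
          simp only [hgE] at h
          exact h
      _ ≤ ENNReal.ofReal ε := hexc
  · have hstep : ∀ x, ∑' w : List Bool, (if (k:ℝ) < (w.length : ℝ) then pX x * f x w else 0)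
        ≤ ∑ y, (if y ∈ 𝒲 then 0 else pX x * W x y) := by
      intro x
      refine le_trans (le_of_eq (key x (fun w => (k:ℝ) < (w.length : ℝ)) inferInstance)) ?_
      refine Finset.sum_le_sum fun y _ => ?_
      by_cases hy : y ∈ 𝒲
      · have hlt : symIdx 𝒲 y < 𝒲.card := symIdx_lt 𝒲 hy
        have hlen : (E y).length ≤ k := enc_len _ _ (by omega)
        have : ¬ ((k:ℝ) < ((E y).length : ℝ)) := by
          push_neg
          exact_mod_cast hlen
        rw [if_neg this, if_pos hy]
      · rw [if_neg hy]
        split <;> simp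
    calc ∑ x, ∑' w : List Bool, (if (k:ℝ) < (w.length : ℝ) then pX x * f x w else 0)
        ≤ ∑ x, ∑ y, (if y ∈ 𝒲 then 0 else pX x * W x y) := Finset.sum_le_sum fun x _ => hstep x
      _ = ∑ y ∈ 𝒲ᶜ, marginal pX W y := by
          rw [Finset.sum_comm]
          rw [← Finset.sum_filter_add_sum_filter_not Finset.univ (fun y => y ∈ 𝒲)]
          have h1 : ∑ y ∈ Finset.univ.filter (fun y => y ∈ 𝒲), ∑ x, (if y ∈ 𝒲 then 0 else pX x * W x y) = 0 := by
            refine Finset.sum_eq_zero fun y hy => ?_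
            rw [Finset.mem_filter] at hy
            simp [hy.2]
          have h2 : Finset.univ.filter (fun y => ¬ y ∈ 𝒲) = 𝒲ᶜ := by
            ext y; simp
          rw [h1, zero_add, h2]
          refine Finset.sum_congr rfl fun y hy => ?_
          rw [Finset.mem_compl] at hy
          simp [hy, marginal]
      _ ≤ ENNReal.ofReal δ := by
          have htot : ∑ y ∈ 𝒲, marginal pX W y + ∑ y ∈ 𝒲ᶜ, marginal pX W y = 1 := by
            rw [Finset.sum_add_sum_compl]
            exact marg_sum_one pX hpX W hW
          have hone : ENNReal.ofReal (1 - δ) + ENNReal.ofReal δ = 1 := by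
            rw [← ENNReal.ofReal_add (by linarith) hδ0]
            norm_num
          have : ENNReal.ofReal (1 - δ) + ∑ y ∈ 𝒲ᶜ, marginal pX W y
              ≤ ENNReal.ofReal (1 - δ) + ENNReal.ofReal δ := by
            rw [hone, ← htot]
            exact add_le_add_left hmass _
          exact (ENNReal.add_le_add_iff_left ENNReal.ofReal_ne_top).mp this

lemma converse {𝒳 𝒴 : Type} [Fintype 𝒳] [Fintype 𝒴]
    (pX : 𝒳 → ℝ≥0∞) (hpX : ∑ x, pX x = 1)
    (d : 𝒳 → 𝒴 → ℝ) (D ε δ R : ℝ) (hR : 0 ≤ R) (hδ0 : 0 ≤ δ) (hδ1 : δ ≤ 1)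
    (f : 𝒳 → List Bool → ℝ≥0∞) (g : List Bool → 𝒴)
    (hcode : IsCode pX d D R ε δ f g) :
    ∃ (W : 𝒳 → 𝒴 → ℝ≥0∞) (𝒲 : Finset 𝒴),
      IsChannel W ∧ chExcess pX W d D ≤ ENNReal.ofReal ε ∧
      ENNReal.ofReal (1 - δ) ≤ ∑ y ∈ 𝒲, marginal pX W y ∧
      𝒲.Nonempty ∧ 𝒲.card + 1 ≤ 2 ^ (⌊R⌋₊ + 1) := by
  classical
  set W : 𝒳 → 𝒴 → ℝ≥0∞ := fun x y => ∑' w : List Bool, if g w = y then f x w else 0 with hWdef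
  set 𝒲 : Finset 𝒴 :=
    Finset.univ.filter (fun y => ∃ w : List Bool, (w.length : ℝ) ≤ R ∧ g w = y) with h𝒲def
  have key2 : ∀ (x : 𝒳) (c : 𝒴 → Prop) (_ : DecidablePred c),
      ∑ y, (if c y then pX x * W x y else 0)
        = ∑' w : List Bool, (if c (g w) then pX x * f x w else 0) := by
    intro x c hdc
    calc ∑ y, (if c y then pX x * W x y else 0)
        = ∑ y, ∑' w : List Bool, (if g w = y then (if c y then pX x * f x w else 0) else 0) := by
          refine Finset.sum_congr rfl fun y _ => ?_
          by_cases hc : c y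
          · simp only [if_pos hc, hWdef]
            rw [← ENNReal.tsum_mul_left]
            exact tsum_congr fun w => by split <;> simp
          · simp [hc]
      _ = ∑' w : List Bool, ∑ y, (if g w = y then (if c y then pX x * f x w else 0) else 0) :=
          (Summable.tsum_finsetSum (fun _ _ => ENNReal.summable)).symm
      _ = ∑' w : List Bool, (if c (g w) then pX x * f x w else 0) := by
          refine tsum_congr fun w => ?_
          rw [Finset.sum_ite_eq Finset.univ (g w)
            (fun y => if c y then pX x * f x w else 0), if_pos (Finset.mem_univ _)]
  refine ⟨W, 𝒲, ?_, ?_, ?_, ?_, ?_⟩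
  · intro x
    rw [← Summable.tsum_finsetSum (fun _ _ => ENNReal.summable)]
    calc ∑' w : List Bool, ∑ y, (if g w = y then f x w else 0)
        = ∑' w : List Bool, f x w := by
          refine tsum_congr fun w => ?_
          rw [Finset.sum_ite_eq Finset.univ (g w) (fun _ => f x w), if_pos (Finset.mem_univ _)]
      _ = 1 := hcode.1 x
  · unfold chExcess
    calc ∑ x, ∑ y, (if D < d x y then pX x * W x y else 0)
        = ∑ x, ∑' w : List Bool, (if D < d x (g w) then pX x * f x w else 0) := by
          refine Finset.sum_congr rfl fun x _ => key2 x (fun y => D < d x y) inferInstance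
      _ ≤ ENNReal.ofReal ε := hcode.2.1
  · have hmargW : ∑ y ∈ 𝒲, marginal pX W y
        = ∑ x, ∑' w : List Bool, (if g w ∈ 𝒲 then pX x * f x w else 0) := by
      calc ∑ y ∈ 𝒲, marginal pX W y
          = ∑ y, (if y ∈ 𝒲 then marginal pX W y else 0) := by
            rw [Finset.sum_ite_mem, Finset.univ_inter]
        _ = ∑ x, ∑ y, (if y ∈ 𝒲 then pX x * W x y else 0) := by
            rw [Finset.sum_comm]
            refine Finset.sum_congr rfl fun y _ => ?_
            by_cases hy : y ∈ 𝒲 <;> simp [hy, marginal]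
        _ = ∑ x, ∑' w : List Bool, (if g w ∈ 𝒲 then pX x * f x w else 0) :=
            Finset.sum_congr rfl fun x _ => key2 x (fun y => y ∈ 𝒲) inferInstance
    have hAB : ∀ x, (∑' w : List Bool, (if (w.length : ℝ) ≤ R then pX x * f x w else 0))
        + (∑' w : List Bool, (if R < (w.length : ℝ) then pX x * f x w else 0)) = pX x := by
      intro x
      rw [← ENNReal.tsum_add]
      calc ∑' w : List Bool, ((if (w.length : ℝ) ≤ R then pX x * f x w else 0)
              + (if R < (w.length : ℝ) then pX x * f x w else 0))
          = ∑' w : List Bool, pX x * f x w := by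
            refine tsum_congr fun w => ?_
            by_cases hw : (w.length : ℝ) ≤ R
            · rw [if_pos hw, if_neg (not_lt.mpr hw), add_zero]
            · rw [if_neg hw, if_pos (not_le.mp hw), zero_add]
        _ = pX x := by rw [ENNReal.tsum_mul_left, hcode.1 x, mul_one]
    have hA : ENNReal.ofReal (1 - δ)
        ≤ ∑ x, ∑' w : List Bool, (if (w.length : ℝ) ≤ R then pX x * f x w else 0) := by
      have htot : (∑ x, ∑' w : List Bool, (if (w.length : ℝ) ≤ R then pX x * f x w else 0))
          + (∑ x, ∑' w : List Bool, (if R < (w.length : ℝ) then pX x * f x w else 0)) = 1 := by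
        rw [← Finset.sum_add_distrib]
        rw [Finset.sum_congr rfl (fun x _ => hAB x), hpX]
      have hone : ENNReal.ofReal (1 - δ) + ENNReal.ofReal δ = 1 := by
        rw [← ENNReal.ofReal_add (by linarith) hδ0]; norm_num
      have hstep : ENNReal.ofReal (1 - δ) + ENNReal.ofReal δ
          ≤ (∑ x, ∑' w : List Bool, (if (w.length : ℝ) ≤ R then pX x * f x w else 0))
            + ENNReal.ofReal δ := by
        rw [hone, ← htot]
        exact add_le_add_right hcode.2.2 _
      exact (ENNReal.add_le_add_iff_right ENNReal.ofReal_ne_top).mp hstep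
    refine le_trans hA ?_
    rw [hmargW]
    refine Finset.sum_le_sum fun x _ => ?_
    refine Summable.tsum_le_tsum (fun w => ?_) ENNReal.summable ENNReal.summable
    by_cases hw : (w.length : ℝ) ≤ R
    · rw [if_pos hw, if_pos (by rw [h𝒲def]; exact Finset.mem_filter.mpr ⟨Finset.mem_univ _, w, hw, rfl⟩)]
    · rw [if_neg hw]; exact zero_le
  · exact ⟨g [], by
      rw [h𝒲def]
      exact Finset.mem_filter.mpr ⟨Finset.mem_univ _, [], by simpa using hR, rfl⟩⟩
  · set k := ⌊R⌋₊ with hk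
    set P : 𝒴 → Prop := fun y => ∃ w : List Bool, (w.length : ℝ) ≤ R ∧ g w = y with hP
    set F : 𝒴 → ℕ := fun y => if h : P y then dec h.choose else 0 with hF
    have hFmem : ∀ y ∈ 𝒲, F y ∈ Finset.range (2 ^ (k + 1) - 1) := by
      intro y hy
      rw [h𝒲def, Finset.mem_filter] at hy
      have hPy : P y := hy.2
      rw [Finset.mem_range]
      simp only [hF, dif_pos hPy]
      obtain ⟨hlen, -⟩ := hPy.choose_spec
      have hlk : hPy.choose.length ≤ k := Nat.le_floor hlen
      have hb := dec_bound hPy.choose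
      have hpow : (2:ℕ) ^ (hPy.choose.length + 1) ≤ 2 ^ (k + 1) :=
        Nat.pow_le_pow_right (by norm_num) (by omega)
      omega
    have hFinj : Set.InjOn F 𝒲 := by
      intro a ha b hb hab
      rw [h𝒲def, Finset.mem_coe, Finset.mem_filter] at ha hb
      have hPa : P a := ha.2
      have hPb : P b := hb.2
      simp only [hF, dif_pos hPa, dif_pos hPb] at hab
      have := dec_inj hab
      rw [← hPa.choose_spec.2, ← hPb.choose_spec.2, this]
    have hle := Finset.card_le_card_of_injOn F hFmem hFinj
    rw [Finset.card_range] at hle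
    have : (1:ℕ) ≤ 2 ^ (k+1) := Nat.one_le_two_pow
    omega

lemma smooth_mem_nonneg {𝒴 : Type} [Fintype 𝒴] (P : 𝒴 → ℝ≥0∞) {δ : ℝ} (hδ1 : δ < 1) :
    ∀ r ∈ {r : ℝ | ∃ W : Finset 𝒴,
      ENNReal.ofReal (1 - δ) ≤ ∑ y ∈ W, P y ∧ r = Real.logb 2 (W.card)}, 0 ≤ r := by
  rintro r ⟨c, hc, rfl⟩
  have hcard : 1 ≤ c.card := by
    by_contra h
    have hc0 : c = ∅ := Finset.card_eq_zero.mp (by omega)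
    rw [hc0, Finset.sum_empty] at hc
    have : (0:ℝ≥0∞) < ENNReal.ofReal (1 - δ) := ENNReal.ofReal_pos.mpr (by linarith)
    exact absurd hc (by simpa using this.not_ge)
  exact Real.logb_nonneg (by norm_num) (by exact_mod_cast hcard)

lemma smooth_card_pos {𝒴 : Type} [Fintype 𝒴] (P : 𝒴 → ℝ≥0∞) {δ : ℝ} (hδ1 : δ < 1)
    {c : Finset 𝒴} (hc : ENNReal.ofReal (1 - δ) ≤ ∑ y ∈ c, P y) : 1 ≤ c.card := by
  by_contra h
  have hc0 : c = ∅ := Finset.card_eq_zero.mp (by omega)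
  rw [hc0, Finset.sum_empty] at hc
  have : (0:ℝ≥0∞) < ENNReal.ofReal (1 - δ) := ENNReal.ofReal_pos.mpr (by linarith)
  exact absurd hc (by simpa using this.not_ge)

lemma Gq_eq_sInf {𝒳 𝒴 : Type} [Fintype 𝒳] [Fintype 𝒴] (pX : 𝒳 → ℝ≥0∞) (d : 𝒳 → 𝒴 → ℝ)
    (D ε δ : ℝ) :
    Gq pX d D ε δ = sInf {v : ℝ≥0∞ | ∃ W : 𝒳 → 𝒴 → ℝ≥0∞, IsChannel W ∧
      chExcess pX W d D ≤ ENNReal.ofReal ε ∧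
      v = ENNReal.ofReal (smoothMaxEnt (marginal pX W) δ)} := by
  apply le_antisymm
  · apply le_sInf
    rintro v ⟨W, h1, h2, rfl⟩
    exact iInf_le_of_le W (le_of_eq (by rw [iInf_pos h1, iInf_pos h2]))
  · refine le_iInf fun W => le_iInf fun h1 => le_iInf fun h2 => sInf_le ⟨W, h1, h2, rfl⟩

theorem stmt2' {𝒳 𝒴 : Type} [Fintype 𝒳] [Fintype 𝒴] [Nonempty 𝒳] [Nonempty 𝒴]
    (pX : 𝒳 → ℝ≥0∞) (hpX : ∑ x, pX x = 1)
    (d : 𝒳 → 𝒴 → ℝ) (hd : ∀ x y, 0 ≤ d x y)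
    (D ε δ : ℝ) (hD : 0 ≤ D) (hε : 0 ≤ ε ∧ ε < 1) (hδ : 0 ≤ δ ∧ δ < 1)
    (hG : Gq pX d D ε δ ≠ ⊤) :
    (Gq pX d D ε δ).toReal - 1 <
        sInf {R : ℝ | 0 ≤ R ∧ ∃ (f : 𝒳 → List Bool → ℝ≥0∞) (g : List Bool → 𝒴),
          IsCode pX d D R ε δ f g} ∧
      sInf {R : ℝ | 0 ≤ R ∧ ∃ (f : 𝒳 → List Bool → ℝ≥0∞) (g : List Bool → 𝒴),
          IsCode pX d D R ε δ f g} ≤ ((⌊(Gq pX d D ε δ).toReal⌋ : ℤ) : ℝ) := by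
  classical
  obtain ⟨hδ0, hδ1⟩ := hδ
  set Rset := {R : ℝ | 0 ≤ R ∧ ∃ (f : 𝒳 → List Bool → ℝ≥0∞) (g : List Bool → 𝒴),
      IsCode pX d D R ε δ f g} with hRset
  set S := {v : ℝ≥0∞ | ∃ W : 𝒳 → 𝒴 → ℝ≥0∞, IsChannel W ∧
      chExcess pX W d D ≤ ENNReal.ofReal ε ∧
      v = ENNReal.ofReal (smoothMaxEnt (marginal pX W) δ)} with hSdef
  have hGS : Gq pX d D ε δ = sInf S := Gq_eq_sInf pX d D ε δ
  -- smooth max ent of any channel's marginal is attained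
  have hattain : ∀ W : 𝒳 → 𝒴 → ℝ≥0∞, IsChannel W →
      ∃ c : Finset 𝒴, ENNReal.ofReal (1 - δ) ≤ ∑ y ∈ c, marginal pX W y ∧
        smoothMaxEnt (marginal pX W) δ = Real.logb 2 (c.card) := by
    intro W hW
    have hne : {r : ℝ | ∃ c : Finset 𝒴,
        ENNReal.ofReal (1 - δ) ≤ ∑ y ∈ c, marginal pX W y ∧
        r = Real.logb 2 (c.card)}.Nonempty := by
      refine ⟨Real.logb 2 ((Finset.univ : Finset 𝒴).card), Finset.univ, ?_, rfl⟩
      rw [marg_sum_one pX hpX W hW]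
      calc ENNReal.ofReal (1 - δ) ≤ ENNReal.ofReal 1 := ENNReal.ofReal_le_ofReal (by linarith)
        _ = 1 := ENNReal.ofReal_one
    have hfin : {r : ℝ | ∃ c : Finset 𝒴,
        ENNReal.ofReal (1 - δ) ≤ ∑ y ∈ c, marginal pX W y ∧
        r = Real.logb 2 (c.card)}.Finite := by
      refine Set.Finite.subset (Set.finite_range (fun c : Finset 𝒴 => Real.logb 2 (c.card))) ?_
      rintro r ⟨c, _, rfl⟩
      exact ⟨c, rfl⟩
    have := hne.csInf_mem hfin
    obtain ⟨c, hc1, hc2⟩ := this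
    exact ⟨c, hc1, hc2⟩
  -- S is nonempty and finite, so its infimum is attained
  have hSne : S.Nonempty := by
    by_contra h
    rw [Set.not_nonempty_iff_eq_empty] at h
    rw [h, sInf_empty] at hGS
    exact hG hGS
  have hSfin : S.Finite := by
    refine Set.Finite.subset
      (Set.finite_range (fun c : Finset 𝒴 => ENNReal.ofReal (Real.logb 2 (c.card)))) ?_
    rintro v ⟨W, hW, hexc, rfl⟩
    obtain ⟨c, _, hc2⟩ := hattain W hW
    exact ⟨c, by rw [hc2]⟩
  obtain ⟨Ws, hWs, hexcs, hvals⟩ := hSne.csInf_mem hSfin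
  rw [← hGS] at hvals
  obtain ⟨c, hc1, hc2⟩ := hattain Ws hWs
  set H : ℝ := smoothMaxEnt (marginal pX Ws) δ with hH
  have hH0 : 0 ≤ H := by
    rw [hc2]
    exact Real.logb_nonneg (by norm_num)
      (by exact_mod_cast smooth_card_pos (marginal pX Ws) hδ1 hc1)
  have hGto : (Gq pX d D ε δ).toReal = H := by
    rw [hvals, ENNReal.toReal_ofReal hH0]
  set k : ℕ := ⌊H⌋₊ with hk
  -- card bound for achievability
  have hcard2 : c.card + 1 ≤ 2 ^ (k + 1) := by
    have hclt : (c.card : ℝ) < 2 ^ (k + 1) := by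
      have h1 : Real.logb 2 (c.card) < (k + 1 : ℝ) := by
        rw [← hc2]
        calc H < ⌊H⌋₊ + 1 := Nat.lt_floor_add_one H
          _ = (k + 1 : ℝ) := by rw [hk]
      have hcpos : (0:ℝ) < c.card := by
        exact_mod_cast smooth_card_pos (marginal pX Ws) hδ1 hc1
      have := (Real.logb_lt_iff_lt_rpow (by norm_num) hcpos).mp h1
      calc (c.card : ℝ) < (2:ℝ) ^ ((k + 1 : ℕ) : ℝ) := by
            convert this using 2
            push_cast; ring
        _ = (2:ℝ) ^ (k + 1) := Real.rpow_natCast 2 (k + 1)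
    have : (c.card : ℝ) < ((2 ^ (k + 1) : ℕ) : ℝ) := by push_cast; exact hclt
    exact_mod_cast this
  obtain ⟨f0, g0, hcode0⟩ := achieve pX hpX d D ε δ hδ0 (le_of_lt hδ1) Ws hWs hexcs c hc1 k hcard2
  have hkmem : (k : ℝ) ∈ Rset := ⟨Nat.cast_nonneg k, f0, g0, hcode0⟩
  have hRne : Rset.Nonempty := ⟨(k : ℝ), hkmem⟩
  have hRbdd : BddBelow Rset := ⟨0, fun R hR => hR.1⟩
  have hfloor : ((⌊(Gq pX d D ε δ).toReal⌋ : ℤ) : ℝ) = (k : ℝ) := by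
    rw [hGto, hk, ← Int.natCast_floor_eq_floor hH0]
    push_cast; ring
  constructor
  · -- converse
    set s := sInf Rset with hs
    have hs0 : 0 ≤ s := le_csInf hRne fun R hR => hR.1
    have hslt : s < (⌊s⌋₊ : ℝ) + 1 := Nat.lt_floor_add_one s
    obtain ⟨R, hRmem, hRlt⟩ := exists_lt_of_csInf_lt hRne hslt
    obtain ⟨hR0, f, g, hcode⟩ := hRmem
    have hk'le : ⌊R⌋₊ ≤ ⌊s⌋₊ := by
      have : ⌊R⌋₊ < ⌊s⌋₊ + 1 := by
        rw [Nat.floor_lt hR0]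
        exact_mod_cast hRlt
      omega
    obtain ⟨W, 𝒲, hWch, hWexc, hWmass, hWne, hWcard⟩ :=
      converse pX hpX d D ε δ R hR0 hδ0 (le_of_lt hδ1) f g hcode
    have hGle : Gq pX d D ε δ ≤ ENNReal.ofReal (smoothMaxEnt (marginal pX W) δ) := by
      rw [hGS]
      exact sInf_le ⟨W, hWch, hWexc, rfl⟩
    have hsm0 : 0 ≤ smoothMaxEnt (marginal pX W) δ := by
      refine le_csInf ⟨_, 𝒲, hWmass, rfl⟩ (smooth_mem_nonneg (marginal pX W) hδ1)
    have hsmle : smoothMaxEnt (marginal pX W) δ ≤ Real.logb 2 (𝒲.card) :=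
      csInf_le ⟨0, smooth_mem_nonneg (marginal pX W) hδ1⟩ ⟨𝒲, hWmass, rfl⟩
    have hGto2 : (Gq pX d D ε δ).toReal ≤ Real.logb 2 (𝒲.card) := by
      calc (Gq pX d D ε δ).toReal
          ≤ (ENNReal.ofReal (smoothMaxEnt (marginal pX W) δ)).toReal :=
            ENNReal.toReal_mono ENNReal.ofReal_ne_top hGle
        _ = smoothMaxEnt (marginal pX W) δ := ENNReal.toReal_ofReal hsm0
        _ ≤ Real.logb 2 (𝒲.card) := hsmle
    have hlogb : Real.logb 2 (𝒲.card) < (⌊R⌋₊ : ℝ) + 1 := by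
      have hcpos : (0:ℝ) < 𝒲.card := by exact_mod_cast hWne.card_pos
      rw [Real.logb_lt_iff_lt_rpow (by norm_num) hcpos]
      have h1 : (𝒲.card : ℝ) < ((2 ^ (⌊R⌋₊ + 1) : ℕ) : ℝ) := by exact_mod_cast by omega
      calc (𝒲.card : ℝ) < ((2 ^ (⌊R⌋₊ + 1) : ℕ) : ℝ) := h1
        _ = (2:ℝ) ^ ((⌊R⌋₊ + 1 : ℕ) : ℝ) := by rw [Real.rpow_natCast]; push_cast; ring
        _ = (2:ℝ) ^ ((⌊R⌋₊ : ℝ) + 1) := by norm_num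
    have hfin : (Gq pX d D ε δ).toReal < (⌊s⌋₊ : ℝ) + 1 := by
      have : ((⌊R⌋₊ : ℝ) + 1) ≤ ((⌊s⌋₊ : ℝ) + 1) := by
        have : (⌊R⌋₊ : ℝ) ≤ (⌊s⌋₊ : ℝ) := by exact_mod_cast hk'le
        linarith
      linarith [lt_of_le_of_lt hGto2 hlogb]
    have : (⌊s⌋₊ : ℝ) ≤ s := Nat.floor_le hs0
    linarith
  · -- achievability
    rw [hfloor]
    exact csInf_le hRbdd hkmem

/-- Two-sided bound on the optimal rate `R*(D,ε,δ)` for possibly stochastic codes: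
`G^δ_{D,ε}(X) - 1 < R*(D,ε,δ) ≤ ⌊G^δ_{D,ε}(X)⌋`. -/
theorem stmt2 {𝒳 𝒴 : Type} [Fintype 𝒳] [Fintype 𝒴] [Nonempty 𝒳] [Nonempty 𝒴]
    (pX : 𝒳 → ℝ≥0∞) (hpX : ∑ x, pX x = 1)
    (d : 𝒳 → 𝒴 → ℝ) (hd : ∀ x y, 0 ≤ d x y)
    (D ε δ : ℝ) (hD : 0 ≤ D) (hε : 0 ≤ ε ∧ ε < 1) (hδ : 0 ≤ δ ∧ δ < 1)
    (hG : Gq pX d D ε δ ≠ ⊤) :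
    (Gq pX d D ε δ).toReal - 1 <
        sInf {R : ℝ | 0 ≤ R ∧ ∃ (f : 𝒳 → List Bool → ℝ≥0∞) (g : List Bool → 𝒴),
          IsCode pX d D R ε δ f g} ∧
      sInf {R : ℝ | 0 ≤ R ∧ ∃ (f : 𝒳 → List Bool → ℝ≥0∞) (g : List Bool → 𝒴),
          IsCode pX d D R ε δ f g} ≤ ((⌊(Gq pX d D ε δ).toReal⌋ : ℤ) : ℝ) :=
  stmt2' pX hpX d hd D ε δ hD hε hδ hG

end
end

section
/- Fix D ≥ 0 and ε, δ ∈ [0,1), and assume G^δ_{D,ε}(X) < +∞. Then there exists a (D, R, ε, δ) code whose encoder is deterministic (a function f : 𝒳 → {0,1}*) with rate R = ⌊G^δ_{D,ε}(X) + (2 log₂ e) / 2^{G^δ_{D,ε}(X)}⌋. -/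
open scoped ENNReal
open MeasureTheory

noncomputable section

/-! ### Auxiliary machinery -/

/-- binary encoding of `n` : the binary digits of `n+1` without the leading bit. -/
def shortStr (n : ℕ) : List Bool :=
  ((Nat.digits 2 (n+1)).dropLast).map (fun d => decide (d = 1))

lemma shortStr_length (n : ℕ) : (shortStr n).length = Nat.log 2 (n+1) := by
  have h := Nat.digits_len 2 (n+1) (by norm_num) (Nat.succ_ne_zero n)
  unfold shortStr
  rw [List.length_map, List.length_dropLast, h]
  omega

lemma shortStr_spec (n : ℕ) :
    Nat.ofDigits 2 ((shortStr n).map Bool.toNat ++ [1]) = n + 1 := by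
  have hne : Nat.digits 2 (n+1) ≠ [] := Nat.digits_ne_nil_iff_ne_zero.mpr (Nat.succ_ne_zero n)
  have hmap : (shortStr n).map Bool.toNat = (Nat.digits 2 (n+1)).dropLast := by
    unfold shortStr
    rw [List.map_map]
    have h : ∀ a ∈ (Nat.digits 2 (n+1)).dropLast,
        (Bool.toNat ∘ fun d => decide (d = 1)) a = id a := by
      intro a ha
      have ha2 : a ∈ Nat.digits 2 (n+1) := (List.dropLast_sublist _).mem ha
      have : a < 2 := Nat.digits_lt_base (by norm_num) ha2
      interval_cases a <;> simp
    rw [List.map_congr_left h, List.map_id]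
  rw [hmap]
  have hlast : (Nat.digits 2 (n+1)).getLast hne = 1 := by
    have h1 : (Nat.digits 2 (n+1)).getLast hne ≠ 0 :=
      Nat.getLast_digit_ne_zero 2 (Nat.succ_ne_zero n)
    have h2 : (Nat.digits 2 (n+1)).getLast hne < 2 :=
      Nat.digits_lt_base (by norm_num) (List.getLast_mem hne)
    omega
  have hdg := List.dropLast_append_getLast hne
  rw [hlast] at hdg
  rw [hdg, Nat.ofDigits_digits]

lemma shortStr_injective : Function.Injective shortStr := by
  intro a b hab
  have h := shortStr_spec a
  rw [hab, shortStr_spec b] at h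
  omega

lemma selection {α : Type} [DecidableEq α] (S : Finset α) (p q r : α → ℝ≥0∞)
    (hpqr : ∀ x ∈ S, p x = q x + r x)
    (E εb δb : ℝ≥0∞) (hεb : εb ≠ ⊤) (hδb : δb ≠ ⊤)
    (hq : E + ∑ x ∈ S, q x ≤ εb) (hr : ∑ x ∈ S, r x ≤ δb)
    (x0 : α) (hx0 : x0 ∈ S) (hmax : ∀ x ∈ S, p x ≤ p x0) :
    ∃ T ⊆ S.erase x0, (E + ∑ x ∈ T, p x ≤ εb) ∧ (∑ x ∈ (S.erase x0) \ T, p x ≤ δb) := by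
  have htot : E + ∑ x ∈ S, p x ≤ εb + δb := by
    have h : ∑ x ∈ S, p x = ∑ x ∈ S, q x + ∑ x ∈ S, r x := by
      rw [← Finset.sum_add_distrib]
      exact Finset.sum_congr rfl hpqr
    calc E + ∑ x ∈ S, p x = (E + ∑ x ∈ S, q x) + ∑ x ∈ S, r x := by rw [h]; ring
    _ ≤ εb + δb := add_le_add hq hr
  set F := (S.erase x0).powerset.filter (fun T => E + ∑ x ∈ T, p x ≤ εb) with hF
  have hFne : F.Nonempty := by
    refine ⟨∅, ?_⟩
    simp only [hF, Finset.mem_filter, Finset.mem_powerset]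
    exact ⟨Finset.empty_subset _, by simpa using le_trans (le_add_right le_rfl) hq⟩
  obtain ⟨T, hTF, hTmax⟩ := Finset.exists_max_image F (fun T => ∑ x ∈ T, p x) hFne
  rw [hF, Finset.mem_filter, Finset.mem_powerset] at hTF
  obtain ⟨hTsub, hTe⟩ := hTF
  refine ⟨T, hTsub, hTe, ?_⟩
  by_contra hcon
  push_neg at hcon
  obtain ⟨z, hz, hzpos⟩ : ∃ z ∈ (S.erase x0) \ T, p z ≠ 0 := by
    by_contra h
    push_neg at h
    have h0 : ∑ x ∈ (S.erase x0) \ T, p x = 0 := Finset.sum_eq_zero h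
    rw [h0] at hcon
    exact (not_le.mpr hcon) (zero_le)
  have hzS : z ∈ S := Finset.mem_of_mem_erase (Finset.mem_sdiff.mp hz).1
  have hzT : z ∉ T := (Finset.mem_sdiff.mp hz).2
  have hunion : E + (∑ x ∈ T, p x + p x0) + ∑ x ∈ (S.erase x0) \ T, p x ≤ εb + δb := by
    have h1 : ∑ x ∈ T, p x + ∑ x ∈ (S.erase x0) \ T, p x = ∑ x ∈ S.erase x0, p x := by
      rw [← Finset.sum_union (Finset.disjoint_sdiff)]
      congr 1
      exact Finset.union_sdiff_of_subset hTsub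
    have h2 : p x0 + ∑ x ∈ S.erase x0, p x = ∑ x ∈ S, p x := Finset.add_sum_erase S p hx0
    calc E + (∑ x ∈ T, p x + p x0) + ∑ x ∈ (S.erase x0) \ T, p x
        = E + (p x0 + (∑ x ∈ T, p x + ∑ x ∈ (S.erase x0) \ T, p x)) := by ring
      _ = E + ∑ x ∈ S, p x := by rw [h1, h2]
      _ ≤ εb + δb := htot
  have hfin : E + (∑ x ∈ T, p x + p x0) ≠ ⊤ := by
    exact ne_top_of_le_ne_top (ENNReal.add_ne_top.mpr ⟨hεb, hδb⟩)
      (le_trans (le_add_right le_rfl) hunion)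
  have hkey : E + (∑ x ∈ T, p x + p x0) < εb := by
    have h1 : E + (∑ x ∈ T, p x + p x0) + δb
        < E + (∑ x ∈ T, p x + p x0) + ∑ x ∈ (S.erase x0) \ T, p x :=
      ENNReal.add_lt_add_left hfin hcon
    have h2 : E + (∑ x ∈ T, p x + p x0) + δb < εb + δb := lt_of_lt_of_le h1 hunion
    exact (ENNReal.add_lt_add_iff_right hδb).mp h2
  have hT'F : insert z T ∈ F := by
    simp only [hF, Finset.mem_filter, Finset.mem_powerset]
    constructor
    · exact Finset.insert_subset (Finset.mem_sdiff.mp hz).1 hTsub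
    · rw [Finset.sum_insert hzT]
      calc E + (p z + ∑ x ∈ T, p x) ≤ E + (∑ x ∈ T, p x + p x0) := by
            rw [add_comm (p z)]; exact add_le_add le_rfl (add_le_add le_rfl (hmax z hzS))
        _ ≤ εb := le_of_lt hkey
  have hlt : ∑ x ∈ T, p x < ∑ x ∈ insert z T, p x := by
    rw [Finset.sum_insert hzT, add_comm]
    exact ENNReal.lt_add_right
      (ne_top_of_le_ne_top hεb (le_trans (le_add_left le_rfl) hTe)) hzpos
  exact (not_lt.mpr (hTmax _ hT'F)) hlt

lemma cap_lemma (g : ℝ) (hg : 0 ≤ g) :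
    (2:ℝ)^g + 1 < (2:ℝ)^((((⌊g + 2 * Real.logb 2 (Real.exp 1) / (2:ℝ)^g⌋ : ℤ)) : ℝ) + 1) := by
  set t : ℝ := (2:ℝ)^g with ht
  have htpos : 0 < t := Real.rpow_pos_of_pos (by norm_num) g
  have ht1 : 1 ≤ t := Real.one_le_rpow (by norm_num) hg
  have hlogb_e : Real.logb 2 (Real.exp 1) = 1 / Real.log 2 := by
    rw [Real.logb, Real.log_exp]
  have hlog2pos : 0 < Real.log 2 := Real.log_pos (by norm_num)
  have hgt : Real.logb 2 t = g := Real.logb_rpow (by norm_num) (by norm_num)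
  have hkey : Real.logb 2 (t+1) ≤ g + 2 * Real.logb 2 (Real.exp 1) / t := by
    have hsplit : Real.logb 2 (t+1) = g + Real.logb 2 ((t+1)/t) := by
      rw [← hgt, ← Real.logb_mul (ne_of_gt htpos) (by positivity)]
      congr 1
      field_simp
    rw [hsplit]
    have h1 : Real.logb 2 ((t+1)/t) ≤ 2 * Real.logb 2 (Real.exp 1) / t := by
      rw [hlogb_e, Real.logb]
      have h2 : Real.log ((t+1)/t) ≤ 1/t := by
        have h3 := Real.log_le_sub_one_of_pos (show (0:ℝ) < (t+1)/t by positivity)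
        have heq : (t+1)/t - 1 = 1/t := by field_simp; ring
        linarith [heq ▸ h3]
      have h3 : Real.log ((t+1)/t)/Real.log 2 ≤ (1/t)/Real.log 2 := by gcongr
      refine h3.trans ?_
      have e1 : (1/t)/Real.log 2 = 1/(t*Real.log 2) := by ring
      have e2 : 2 * (1/Real.log 2) / t = 2/(t*Real.log 2) := by ring
      rw [e1, e2]
      have hpos : 0 < t * Real.log 2 := by positivity
      exact (div_le_div_iff_of_pos_right hpos).mpr (by norm_num)
    linarith
  have hfl : Real.logb 2 (t+1) < (((⌊g + 2 * Real.logb 2 (Real.exp 1) / t⌋ : ℤ)) : ℝ) + 1 :=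
    lt_of_le_of_lt hkey (Int.lt_floor_add_one _)
  calc t + 1 = (2:ℝ) ^ (Real.logb 2 (t+1)) :=
        (Real.rpow_logb (by norm_num) (by norm_num) (by positivity)).symm
    _ < (2:ℝ)^((((⌊g + 2 * Real.logb 2 (Real.exp 1) / t⌋ : ℤ)) : ℝ) + 1) :=
        (Real.rpow_lt_rpow_left_iff (by norm_num)).mpr hfl

/-- Achievability with a deterministic encoder: if `G^δ_{D,ε}(X) < ∞`, there is a
deterministic `(D, R, ε, δ)` code with rate
`R = ⌊G^δ_{D,ε}(X) + (2 log₂ e) / 2^{G^δ_{D,ε}(X)}⌋`. -/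
theorem stmt3 {𝒳 𝒴 : Type} [Fintype 𝒳] [Fintype 𝒴] [Nonempty 𝒳] [Nonempty 𝒴]
    (pX : 𝒳 → ℝ≥0∞) (hpX : ∑ x, pX x = 1)
    (d : 𝒳 → 𝒴 → ℝ) (hd : ∀ x y, 0 ≤ d x y)
    (D ε δ : ℝ) (hD : 0 ≤ D) (hε : 0 ≤ ε ∧ ε < 1) (hδ : 0 ≤ δ ∧ δ < 1)
    (hG : Gq pX d D ε δ ≠ ⊤) :
    ∃ (f : 𝒳 → List Bool) (g : List Bool → 𝒴),
      IsCode pX d D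
        ((⌊(Gq pX d D ε δ).toReal +
            2 * Real.logb 2 (Real.exp 1) / (2 : ℝ) ^ (Gq pX d D ε δ).toReal⌋ : ℤ) : ℝ)
        ε δ (detEnc f) g := by
  classical
  set G := Gq pX d D ε δ with hGdef
  set g0 : ℝ := G.toReal with hg0def
  have hg0 : 0 ≤ g0 := ENNReal.toReal_nonneg
  have htpos : (0:ℝ) < (2:ℝ)^g0 := Real.rpow_pos_of_pos (by norm_num) _
  have hcnn : 0 ≤ 2 * Real.logb 2 (Real.exp 1) := by
    have h : 0 ≤ Real.logb 2 (Real.exp 1) := by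
      rw [Real.logb, Real.log_exp]
      positivity
    linarith
  set L : ℤ := ⌊g0 + 2 * Real.logb 2 (Real.exp 1) / (2:ℝ)^g0⌋ with hLdef
  have hL0 : 0 ≤ L := Int.floor_nonneg.mpr (by positivity)
  set Ln : ℕ := L.toNat with hLndef
  have hLcast : ((Ln : ℕ) : ℝ) = (L : ℝ) := by
    exact_mod_cast congrArg (Int.cast : ℤ → ℝ) (Int.toNat_of_nonneg hL0)
  set m : ℕ := ⌊(2:ℝ)^g0⌋₊ with hmdef
  have h2glt : (2:ℝ)^g0 < (m:ℝ) + 1 := Nat.lt_floor_add_one _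
  have hm1 : 1 ≤ m := by
    rw [hmdef]
    exact Nat.le_floor (by exact_mod_cast Real.one_le_rpow (by norm_num) hg0)
  -- capacity bound
  have hcapR : (2:ℝ)^g0 + 1 < (2:ℝ)^(((L:ℤ):ℝ) + 1) := cap_lemma g0 hg0
  have hcapN : m + 2 ≤ 2^(Ln+1) := by
    have hmle : (m:ℝ) ≤ (2:ℝ)^g0 := Nat.floor_le (le_of_lt htpos)
    have h1 : ((m:ℕ):ℝ) + 1 < ((2^(Ln+1) : ℕ) : ℝ) := by
      have e : ((2^(Ln+1) : ℕ) : ℝ) = (2:ℝ)^(((L:ℤ):ℝ) + 1) := by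
        push_cast
        rw [← hLcast]
        rw [show ((Ln:ℕ):ℝ) + 1 = (((Ln+1 : ℕ)):ℝ) by push_cast; ring]
        rw [Real.rpow_natCast]
      rw [e]
      linarith
    have h2 : m + 1 < 2^(Ln+1) := by exact_mod_cast h1
    omega
  -- extract a channel
  have hηpre : g0 < Real.logb 2 ((m:ℝ)+1) := by
    have h := Real.logb_lt_logb (b := 2) (by norm_num) htpos h2glt
    rwa [Real.logb_rpow (by norm_num) (by norm_num)] at h
  set η : ℝ := (Real.logb 2 ((m:ℝ)+1) - g0)/2 with hηdef
  have hηpos : 0 < η := by rw [hηdef]; linarith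
  have hGlt : G < G + ENNReal.ofReal η :=
    ENNReal.lt_add_right hG (by simp [ENNReal.ofReal_eq_zero]; linarith)
  have hex : ∃ W : 𝒳 → 𝒴 → ℝ≥0∞, IsChannel W ∧ chExcess pX W d D ≤ ENNReal.ofReal ε ∧
      ENNReal.ofReal (smoothMaxEnt (marginal pX W) δ) < G + ENNReal.ofReal η := by
    have h2 : (⨅ (W : 𝒳 → 𝒴 → ℝ≥0∞) (_ : IsChannel W)
        (_ : chExcess pX W d D ≤ ENNReal.ofReal ε),
        ENNReal.ofReal (smoothMaxEnt (marginal pX W) δ)) < G + ENNReal.ofReal η := hGlt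
    rw [iInf_lt_iff] at h2
    obtain ⟨W, h2⟩ := h2
    rw [iInf_lt_iff] at h2
    obtain ⟨hW1, h2⟩ := h2
    rw [iInf_lt_iff] at h2
    obtain ⟨hW2, h2⟩ := h2
    exact ⟨W, hW1, hW2, h2⟩
  obtain ⟨W, hW1, hW2, hW3⟩ := hex
  set M := marginal pX W with hMdef
  have hM1 : ∑ y, M y = 1 := by
    rw [hMdef]
    unfold marginal
    rw [Finset.sum_comm]
    calc ∑ x, ∑ y, pX x * W x y = ∑ x, pX x * ∑ y, W x y :=
          Finset.sum_congr rfl (fun x _ => (Finset.mul_sum _ _ _).symm)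
      _ = ∑ x, pX x := Finset.sum_congr rfl (fun x _ => by rw [hW1 x, mul_one])
      _ = 1 := hpX
  -- get the minimizing set
  obtain ⟨W0, hW0mass, hW0card⟩ : ∃ W0 : Finset 𝒴,
      ENNReal.ofReal (1 - δ) ≤ ∑ y ∈ W0, M y ∧
      smoothMaxEnt M δ = Real.logb 2 (W0.card) := by
    have hne : Set.Nonempty {r : ℝ | ∃ Wf : Finset 𝒴,
        ENNReal.ofReal (1 - δ) ≤ ∑ y ∈ Wf, M y ∧ r = Real.logb 2 (Wf.card)} := by
      refine ⟨Real.logb 2 ((Finset.univ : Finset 𝒴).card), Finset.univ, ?_, rfl⟩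
      rw [hM1]
      exact ENNReal.ofReal_le_one.mpr (by linarith [hδ.1])
    have hfin : Set.Finite {r : ℝ | ∃ Wf : Finset 𝒴,
        ENNReal.ofReal (1 - δ) ≤ ∑ y ∈ Wf, M y ∧ r = Real.logb 2 (Wf.card)} := by
      refine Set.Finite.subset (Set.Finite.image
        (fun Wf : Finset 𝒴 => Real.logb 2 (Wf.card)) Set.finite_univ) ?_
      rintro r ⟨Wf, _, rfl⟩
      exact ⟨Wf, trivial, rfl⟩
    obtain ⟨W0, hW0, hcard⟩ := hne.csInf_mem hfin
    exact ⟨W0, hW0, hcard⟩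
  set k : ℕ := W0.card with hkdef
  have hk1 : 1 ≤ k := by
    by_contra h
    have hk0 : k = 0 := by omega
    have hW0e : W0 = ∅ := Finset.card_eq_zero.mp hk0
    rw [hW0e, Finset.sum_empty] at hW0mass
    have := ENNReal.ofReal_eq_zero.mp (le_antisymm hW0mass (zero_le))
    linarith [hδ.2]
  have hW0ne : W0.Nonempty := Finset.card_pos.mp hk1
  -- k ≤ m
  have hsm_lt : smoothMaxEnt M δ < g0 + η := by
    by_contra h
    push_neg at h
    have h1 : ENNReal.ofReal (g0 + η) ≤ ENNReal.ofReal (smoothMaxEnt M δ) :=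
      ENNReal.ofReal_le_ofReal h
    rw [ENNReal.ofReal_add hg0 (le_of_lt hηpos)] at h1
    rw [hg0def, ENNReal.ofReal_toReal hG] at h1
    exact absurd hW3 (not_lt.mpr h1)
  have hkm : k ≤ m := by
    have h1 : Real.logb 2 (k:ℝ) < Real.logb 2 ((m:ℝ)+1) := by
      rw [hW0card] at hsm_lt
      have : g0 + η < Real.logb 2 ((m:ℝ)+1) := by rw [hηdef]; linarith
      linarith
    have h2 : (k:ℝ) < (m:ℝ)+1 := by
      by_contra h
      push_neg at h
      have h3 := Real.logb_le_logb_of_le (b := 2) (by norm_num) (by positivity) h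
      linarith
    have : k < m + 1 := by exact_mod_cast h2
    omega

  -- distortion balls
  set ball : 𝒳 → Finset 𝒴 := fun x => Finset.univ.filter (fun y => d x y ≤ D) with hballdef
  have hballmem : ∀ x y, y ∈ ball x ↔ d x y ≤ D := by
    intro x y
    rw [hballdef]
    simp
  set S : Finset 𝒳 := Finset.univ.filter (fun x => (ball x).Nonempty ∧ ball x ∩ W0 = ∅) with hSdef
  set C3 : Finset 𝒳 := Finset.univ.filter (fun x => ball x = ∅) with hC3def
  set qf : 𝒳 → ℝ≥0∞ := fun x => ∑ y ∈ W0, pX x * W x y with hqfdef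
  set rf : 𝒳 → ℝ≥0∞ := fun x => ∑ y ∈ W0ᶜ, pX x * W x y with hrfdef
  set E : ℝ≥0∞ := ∑ x ∈ C3, pX x with hEdef
  have hpqr : ∀ x : 𝒳, pX x = qf x + rf x := by
    intro x
    rw [hqfdef, hrfdef]
    dsimp only
    rw [Finset.sum_add_sum_compl W0 (fun y => pX x * W x y)]
    rw [← Finset.mul_sum, hW1 x, mul_one]
  have hdisj : Disjoint C3 S := by
    rw [Finset.disjoint_left]
    intro x hx1 hx2
    rw [hC3def, Finset.mem_filter] at hx1
    rw [hSdef, Finset.mem_filter] at hx2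
    rw [hx1.2] at hx2
    exact Finset.not_nonempty_empty hx2.2.1
  have hqbound : E + ∑ x ∈ S, qf x ≤ ENNReal.ofReal ε := by
    set ex : 𝒳 → ℝ≥0∞ := fun x => ∑ y, if D < d x y then pX x * W x y else 0 with hexdef
    have hex1 : ∀ x ∈ C3, pX x = ex x := by
      intro x hx
      rw [hC3def, Finset.mem_filter] at hx
      have hall : ∀ y, D < d x y := by
        intro y
        have h : y ∉ ball x := by rw [hx.2]; exact Finset.notMem_empty y
        rw [hballmem] at h
        exact not_le.mp h
      rw [hexdef]
      dsimp only
      rw [Finset.sum_congr rfl (fun y _ => if_pos (hall y))]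
      rw [← Finset.mul_sum, hW1 x, mul_one]
    have hex2 : ∀ x ∈ S, qf x ≤ ex x := by
      intro x hx
      rw [hSdef, Finset.mem_filter] at hx
      have hyW0 : ∀ y ∈ W0, D < d x y := by
        intro y hy
        by_contra h
        push_neg at h
        have h1 : y ∈ ball x := (hballmem x y).mpr h
        have h2 : y ∈ ball x ∩ W0 := Finset.mem_inter.mpr ⟨h1, hy⟩
        rw [hx.2.2] at h2
        exact absurd h2 (Finset.notMem_empty y)
      calc qf x = ∑ y ∈ W0, (if D < d x y then pX x * W x y else 0) := by
            rw [hqfdef]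
            exact Finset.sum_congr rfl (fun y hy => (if_pos (hyW0 y hy)).symm)
        _ ≤ ex x := Finset.sum_le_sum_of_subset (Finset.subset_univ W0)
    calc E + ∑ x ∈ S, qf x ≤ ∑ x ∈ C3, ex x + ∑ x ∈ S, ex x := by
          rw [hEdef]
          exact add_le_add (le_of_eq (Finset.sum_congr rfl hex1)) (Finset.sum_le_sum hex2)
      _ = ∑ x ∈ C3 ∪ S, ex x := (Finset.sum_union hdisj).symm
      _ ≤ ∑ x, ex x := Finset.sum_le_sum_of_subset (Finset.subset_univ _)
      _ ≤ ENNReal.ofReal ε := hW2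
  have hrbound : ∑ x ∈ S, rf x ≤ ENNReal.ofReal δ := by
    have h1 : ∑ x, rf x = ∑ y ∈ W0ᶜ, M y := by
      rw [hrfdef]
      dsimp only
      rw [Finset.sum_comm]
      exact Finset.sum_congr rfl (fun y _ => rfl)
    have h2 : ∑ y ∈ W0ᶜ, M y ≤ ENNReal.ofReal δ := by
      have hsum : ∑ y ∈ W0, M y + ∑ y ∈ W0ᶜ, M y = 1 := by
        rw [Finset.sum_add_sum_compl W0 M, hM1]
      have hone : (1:ℝ≥0∞) = ENNReal.ofReal (1-δ) + ENNReal.ofReal δ := by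
        rw [← ENNReal.ofReal_add (by linarith [hδ.2]) hδ.1]
        norm_num
      have h3 : ENNReal.ofReal (1-δ) + ∑ y ∈ W0ᶜ, M y
          ≤ ENNReal.ofReal (1-δ) + ENNReal.ofReal δ := by
        calc ENNReal.ofReal (1-δ) + ∑ y ∈ W0ᶜ, M y ≤ ∑ y ∈ W0, M y + ∑ y ∈ W0ᶜ, M y :=
              add_le_add hW0mass le_rfl
          _ = 1 := hsum
          _ = _ := hone
      exact (ENNReal.add_le_add_iff_left ENNReal.ofReal_ne_top).mp h3
    calc ∑ x ∈ S, rf x ≤ ∑ x, rf x := Finset.sum_le_sum_of_subset (Finset.subset_univ _)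
      _ = ∑ y ∈ W0ᶜ, M y := h1
      _ ≤ ENNReal.ofReal δ := h2
  obtain ⟨x0, T, hTsub, hTe, hRd⟩ : ∃ (x0 : 𝒳) (T : Finset 𝒳), T ⊆ S.erase x0 ∧
      (E + ∑ x ∈ T, pX x ≤ ENNReal.ofReal ε) ∧
      (∑ x ∈ (S.erase x0) \ T, pX x ≤ ENNReal.ofReal δ) := by
    rcases S.eq_empty_or_nonempty with hS | hS
    · refine ⟨Classical.arbitrary 𝒳, ∅, by simp, ?_, ?_⟩
      · calc E + ∑ x ∈ (∅ : Finset 𝒳), pX x = E + ∑ x ∈ S, qf x := by rw [hS]; simp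
          _ ≤ ENNReal.ofReal ε := hqbound
      · rw [hS]
        simp
    · obtain ⟨x0, hx0S, hx0max⟩ := Finset.exists_max_image S pX hS
      obtain ⟨T, h1, h2, h3⟩ := selection S pX qf rf (fun x _ => hpqr x) E _ _
        ENNReal.ofReal_ne_top ENNReal.ofReal_ne_top hqbound hrbound x0 hx0S hx0max
      exact ⟨x0, T, h1, h2, h3⟩
  set R' : Finset 𝒳 := (S.erase x0) \ T with hR'def
  have hdisjT : Disjoint C3 T :=
    hdisj.mono_right (le_trans hTsub (Finset.erase_subset x0 S))
  obtain ⟨w0, hw0⟩ := hW0ne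
  set yfun : 𝒳 → 𝒴 := fun x =>
    if hx : (ball x ∩ W0).Nonempty then hx.choose
    else if x ∈ T then w0
    else if hx2 : (ball x).Nonempty then hx2.choose
    else w0 with hyfun
  have hyA : ∀ x, (hx : (ball x ∩ W0).Nonempty) → yfun x ∈ ball x ∩ W0 := by
    intro x hx
    rw [hyfun]
    dsimp only
    rw [dif_pos hx]
    exact hx.choose_spec
  have hyB : ∀ x, ¬(ball x ∩ W0).Nonempty → x ∈ T → yfun x = w0 := by
    intro x hx hxT
    rw [hyfun]
    dsimp only
    rw [dif_neg hx, if_pos hxT]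
  have hyC : ∀ x, ¬(ball x ∩ W0).Nonempty → x ∉ T →
      (hx2 : (ball x).Nonempty) → yfun x ∈ ball x := by
    intro x hx hxT hx2
    rw [hyfun]
    dsimp only
    rw [dif_neg hx, if_neg hxT, dif_pos hx2]
    exact hx2.choose_spec
  have hyD : ∀ x, ¬(ball x ∩ W0).Nonempty → x ∉ T → ¬(ball x).Nonempty → yfun x = w0 := by
    intro x hx hxT hx2
    rw [hyfun]
    dsimp only
    rw [dif_neg hx, if_neg hxT, dif_neg hx2]
  set Wc : Finset 𝒴 := insert (yfun x0) W0 with hWcdef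
  have hw0Wc : w0 ∈ Wc := by
    rw [hWcdef]
    exact Finset.mem_insert_of_mem hw0
  have hWccard : Wc.card + 1 ≤ 2^(Ln+1) := by
    have h1 : Wc.card ≤ k + 1 := by
      rw [hWcdef, hkdef]
      exact Finset.card_insert_le _ _
    exact le_trans (by omega : Wc.card + 1 ≤ m + 2) hcapN
  set enc : 𝒴 → List Bool := fun yy =>
    if yy ∈ Wc then shortStr (Wc.toList.idxOf yy)
    else List.replicate (Ln + 1 + (Finset.univ : Finset 𝒴).toList.idxOf yy) true with hencdef
  have hshort : ∀ yy ∈ Wc, (enc yy).length ≤ Ln := by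
    intro yy hyy
    rw [hencdef]
    dsimp only
    rw [if_pos hyy, shortStr_length]
    have hidx : Wc.toList.idxOf yy < Wc.card := by
      rw [← Finset.length_toList]
      exact List.idxOf_lt_length_iff.mpr (Finset.mem_toList.mpr hyy)
    have h2 : Wc.toList.idxOf yy + 1 < 2^(Ln+1) := by omega
    have h3 := Nat.log_lt_of_lt_pow (Nat.succ_ne_zero _) h2
    exact Nat.lt_succ_iff.mp h3
  have hlong : ∀ yy, yy ∉ Wc → Ln + 1 ≤ (enc yy).length := by
    intro yy hyy
    rw [hencdef]
    dsimp only
    rw [if_neg hyy, List.length_replicate]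
    omega
  have hencinj : Function.Injective enc := by
    intro a b hab
    by_cases ha : a ∈ Wc <;> by_cases hb : b ∈ Wc
    · rw [hencdef] at hab
      dsimp only at hab
      rw [if_pos ha, if_pos hb] at hab
      have h1 := shortStr_injective hab
      exact (List.idxOf_inj (Finset.mem_toList.mpr ha)).mp h1
    · exfalso
      have h1 := hshort a ha
      have h2 := hlong b hb
      rw [hab] at h1
      omega
    · exfalso
      have h1 := hshort b hb
      have h2 := hlong a ha
      rw [hab] at h2
      omega
    · rw [hencdef] at hab
      dsimp only at hab
      rw [if_neg ha, if_neg hb] at hab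
      have h1 := congrArg List.length hab
      rw [List.length_replicate, List.length_replicate] at h1
      have h2 : (Finset.univ : Finset 𝒴).toList.idxOf a
          = (Finset.univ : Finset 𝒴).toList.idxOf b := by omega
      exact (List.idxOf_inj (Finset.mem_toList.mpr (Finset.mem_univ a))).mp h2
  set gdec : List Bool → 𝒴 := Function.invFun enc with hgdecdef
  have hgdec : ∀ yy, gdec (enc yy) = yy := fun yy => Function.leftInverse_invFun hencinj yy
  set f0 : 𝒳 → List Bool := fun x => enc (yfun x) with hf0def
  refine ⟨f0, gdec, ?_, ?_, ?_⟩
  · intro x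
    simp only [detEnc]
    exact tsum_ite_eq (f0 x) 1
  · -- excess distortion bound
    have hstep : ∀ x : 𝒳,
        (∑' w : List Bool, (if D < d x (gdec w) then pX x * detEnc f0 x w else 0))
        = (if D < d x (yfun x) then pX x else 0) := by
      intro x
      rw [tsum_eq_single (f0 x) ?_]
      · have h1 : detEnc f0 x (f0 x) = 1 := if_pos rfl
        have h2 : gdec (f0 x) = yfun x := hgdec (yfun x)
        rw [h1, mul_one, h2]
      · intro w hw
        have h1 : detEnc f0 x w = 0 := by
          simp only [detEnc]
          rw [if_neg hw]
        rw [h1, mul_zero, ite_self]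
    calc ∑ x, ∑' w : List Bool, (if D < d x (gdec w) then pX x * detEnc f0 x w else 0)
        = ∑ x, (if D < d x (yfun x) then pX x else 0) :=
          Finset.sum_congr rfl (fun x _ => hstep x)
      _ = ∑ x ∈ Finset.univ.filter (fun x => D < d x (yfun x)), pX x :=
          (Finset.sum_filter _ _).symm
      _ ≤ ∑ x ∈ C3 ∪ T, pX x := by
          refine Finset.sum_le_sum_of_subset ?_
          intro x hx
          rw [Finset.mem_filter] at hx
          have hxd := hx.2
          have hnball : yfun x ∉ ball x := by
            intro h
            rw [hballmem] at h
            linarith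
          rw [Finset.mem_union]
          by_cases hb1 : (ball x ∩ W0).Nonempty
          · exact absurd (Finset.mem_inter.mp (hyA x hb1)).1 hnball
          · by_cases hbT : x ∈ T
            · exact Or.inr hbT
            · by_cases hb2 : (ball x).Nonempty
              · exact absurd (hyC x hb1 hbT hb2) hnball
              · refine Or.inl ?_
                rw [hC3def, Finset.mem_filter]
                exact ⟨Finset.mem_univ x, Finset.not_nonempty_iff_eq_empty.mp hb2⟩
      _ = E + ∑ x ∈ T, pX x := by rw [Finset.sum_union hdisjT, hEdef]
      _ ≤ ENNReal.ofReal ε := hTe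
  · -- overflow bound
    have hstep : ∀ x : 𝒳,
        (∑' w : List Bool, (if ((L:ℤ):ℝ) < ((w.length:ℕ):ℝ) then pX x * detEnc f0 x w else 0))
        = (if ((L:ℤ):ℝ) < (((f0 x).length:ℕ):ℝ) then pX x else 0) := by
      intro x
      rw [tsum_eq_single (f0 x) ?_]
      · have h1 : detEnc f0 x (f0 x) = 1 := if_pos rfl
        rw [h1, mul_one]
      · intro w hw
        have h1 : detEnc f0 x w = 0 := by
          simp only [detEnc]
          rw [if_neg hw]
        rw [h1, mul_zero, ite_self]
    calc ∑ x, ∑' w : List Bool, (if ((L:ℤ):ℝ) < ((w.length:ℕ):ℝ) then pX x * detEnc f0 x w else 0)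
        = ∑ x, (if ((L:ℤ):ℝ) < (((f0 x).length:ℕ):ℝ) then pX x else 0) :=
          Finset.sum_congr rfl (fun x _ => hstep x)
      _ = ∑ x ∈ Finset.univ.filter (fun x => ((L:ℤ):ℝ) < (((f0 x).length:ℕ):ℝ)), pX x :=
          (Finset.sum_filter _ _).symm
      _ ≤ ∑ x ∈ R', pX x := by
          refine Finset.sum_le_sum_of_subset ?_
          intro x hx
          rw [Finset.mem_filter] at hx
          have hxlen := hx.2
          have hxW : yfun x ∉ Wc := by
            intro h
            have h1 := hshort (yfun x) h
            have h2 : (((f0 x).length:ℕ):ℝ) ≤ ((Ln:ℕ):ℝ) := by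
              exact_mod_cast Nat.cast_le.mpr h1
            rw [hLcast] at h2
            linarith
          by_cases hb1 : (ball x ∩ W0).Nonempty
          · exact absurd (Finset.mem_insert_of_mem (Finset.mem_inter.mp (hyA x hb1)).2) hxW
          · by_cases hbT : x ∈ T
            · rw [hyB x hb1 hbT] at hxW
              exact absurd hw0Wc hxW
            · by_cases hb2 : (ball x).Nonempty
              · have hxS : x ∈ S := by
                  rw [hSdef, Finset.mem_filter]
                  exact ⟨Finset.mem_univ x, hb2, Finset.not_nonempty_iff_eq_empty.mp hb1⟩
                by_cases hx0 : x = x0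
                · exfalso
                  rw [hx0] at hxW
                  exact hxW (Finset.mem_insert_self _ _)
                · rw [hR'def]
                  rw [Finset.mem_sdiff]
                  exact ⟨Finset.mem_erase.mpr ⟨hx0, hxS⟩, hbT⟩
              · rw [hyD x hb1 hbT hb2] at hxW
                exact absurd hw0Wc hxW
      _ ≤ ENNReal.ofReal δ := hRd

end
end

section
/- Fix D ≥ 0 and ε, δ ∈ [0,1). For every positive integer n such that G^δ_{D,ε}(X^n) < +∞, it holds that (G^δ_{D,ε}(X^n) − 1)/n < R*(n, D, ε, δ) ≤ R̃(n, D, ε, δ) ≤ (G^δ_{D,ε}(X^n) + 3)/n. In particular, both R*(n,D,ε,δ) and R̃(n,D,ε,δ) equal (1/n)·G^δ_{D,ε}(X^n) + O(1/n). -/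
open scoped ENNReal
open MeasureTheory

noncomputable section

/-- binary expansion of `m` with `k` bits. -/
def vlcNatToList : ℕ → ℕ → List Bool
  | 0, _ => []
  | (k+1), m => (decide (m % 2 = 1)) :: vlcNatToList k (m / 2)

lemma vlcNatToList_length (k m : ℕ) : (vlcNatToList k m).length = k := by
  induction k generalizing m with
  | zero => rfl
  | succ k ih => simp [vlcNatToList, ih]

lemma vlcNatToList_inj (k : ℕ) : ∀ m₁ m₂, m₁ < 2^k → m₂ < 2^k →
    vlcNatToList k m₁ = vlcNatToList k m₂ → m₁ = m₂ := by
  induction k with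
  | zero => intro m₁ m₂ h1 h2 _; simp [pow_zero] at h1 h2; omega
  | succ k ih =>
    intro m₁ m₂ h1 h2 h
    simp only [vlcNatToList, List.cons.injEq] at h
    have hb : m₁ % 2 = m₂ % 2 := by
      have := h.1
      by_cases h1 : m₁ % 2 = 1 <;> by_cases h2 : m₂ % 2 = 1 <;> simp [h1, h2] at this ⊢ <;> omega
    have ht : m₁ / 2 = m₂ / 2 := ih _ _ (by omega) (by omega) h.2
    omega

/-- numeric encoding of a binary string, injective. -/
def vlcListNum : List Bool → ℕ
  | [] => 1
  | (b :: t) => 2 * vlcListNum t + (if b then 1 else 0)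

lemma vlcListNum_pos (w : List Bool) : 1 ≤ vlcListNum w := by
  induction w with
  | nil => simp [vlcListNum]
  | cons b t ih => simp only [vlcListNum]; omega

lemma vlcListNum_lt (w : List Bool) : vlcListNum w < 2 ^ (w.length + 1) := by
  induction w with
  | nil => simp [vlcListNum]
  | cons b t ih =>
    simp only [vlcListNum, List.length_cons]
    have : 2 ^ (t.length + 1 + 1) = 2 * 2 ^ (t.length + 1) := by ring
    rw [this]
    by_cases hb : b <;> simp [hb] <;> omega

lemma vlcListNum_inj : Function.Injective vlcListNum := by
  intro w₁
  induction w₁ with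
  | nil =>
    intro w₂ h
    cases w₂ with
    | nil => rfl
    | cons b t =>
      exfalso
      have := vlcListNum_pos t
      simp only [vlcListNum] at h
      by_cases hb : b <;> simp [hb] at h <;> omega
  | cons b t ih =>
    intro w₂ h
    cases w₂ with
    | nil =>
      exfalso
      have := vlcListNum_pos t
      simp only [vlcListNum] at h
      by_cases hb : b <;> simp [hb] at h <;> omega
    | cons b' t' =>
      simp only [vlcListNum] at h
      have h1 := vlcListNum_pos t
      have h2 := vlcListNum_pos t'
      have hb : b = b' := by
        by_cases hb : b <;> by_cases hb' : b' <;> simp [hb, hb'] at h ⊢ <;> omega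
      have ht : vlcListNum t = vlcListNum t' := by
        by_cases hb : b <;> by_cases hb' : b' <;> simp [hb, hb'] at h hb ⊢ <;> omega
      rw [hb, ih ht]




lemma vlc_tsum_detEnc {𝒳 : Type} (fe : 𝒳 → List Bool) (x : 𝒳) :
    ∑' w : List Bool, detEnc fe x w = 1 := by
  simp [detEnc, tsum_ite_eq]

lemma vlc_tsum_detEnc_ite {𝒳 : Type} (fe : 𝒳 → List Bool) (x : 𝒳)
    (P : List Bool → Prop) [DecidablePred P] (q : ℝ≥0∞) :
    ∑' w : List Bool, (if P w then q * detEnc fe x w else 0)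
      = if P (fe x) then q else 0 := by
  have h : ∀ w, (if P w then q * detEnc fe x w else 0)
      = if w = fe x then (if P (fe x) then q else 0) else 0 := by
    intro w
    by_cases hw : w = fe x
    · subst hw; by_cases hP : P (fe x) <;> simp [detEnc, hP]
    · by_cases hP : P w <;> simp [detEnc, hw, hP]
  rw [tsum_congr h, tsum_ite_eq]

lemma vlc_master {𝒴 : Type} [Fintype 𝒴] [DecidableEq 𝒴] (g : List Bool → 𝒴) (P : 𝒴 → Prop)
    [DecidablePred P] (q : ℝ≥0∞) (h : List Bool → ℝ≥0∞) :
    ∑ y : 𝒴, (if P y then q * ∑' w : List Bool, (if g w = y then h w else 0) else 0)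
      = ∑' w : List Bool, (if P (g w) then q * h w else 0) := by
  have step1 : ∀ y, (if P y then q * ∑' w : List Bool, (if g w = y then h w else 0) else 0)
      = ∑' w : List Bool, (if g w = y then (if P y then q * h w else 0) else 0) := by
    intro y
    by_cases hP : P y
    · simp only [hP, if_true]
      rw [← ENNReal.tsum_mul_left]
      exact tsum_congr fun w => by by_cases hg : g w = y <;> simp [hg]
    · simp [hP]
  rw [Finset.sum_congr rfl (fun y _ => step1 y)]
  rw [← Summable.tsum_finsetSum (fun y _ => ENNReal.summable)]
  refine tsum_congr fun w => ?_
  rw [Finset.sum_ite_eq Finset.univ (g w) (fun y => if P y then q * h w else 0)]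
  simp

/-- splitting a small-mass finite set into an `a`-part, a `b`-part and at most one
exceptional element. -/
lemma vlc_split {X : Type} [DecidableEq X] (B : Finset X) (p : X → ℝ≥0∞) (a b : ℝ≥0∞)
    (htot : ∑ x ∈ B, p x ≤ a + b) :
    ∃ S E : Finset X, S ⊆ B ∧ E ⊆ B \ S ∧ E.card ≤ 1 ∧
      (∑ x ∈ S, p x ≤ a) ∧ (∑ x ∈ (B \ S) \ E, p x ≤ b) := by
  classical
  set P := (B.powerset.filter (fun S => ∑ x ∈ S, p x ≤ a)) with hP
  have hPne : P.Nonempty := ⟨∅, by simp [hP]⟩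
  obtain ⟨S, hSP, hSmax⟩ := P.exists_max_image (fun S => S.card) hPne
  have hSB : S ⊆ B := Finset.mem_powerset.mp (Finset.mem_filter.mp hSP).1
  have hSa : ∑ x ∈ S, p x ≤ a := (Finset.mem_filter.mp hSP).2
  by_cases hrem : B \ S = ∅
  · exact ⟨S, ∅, hSB, by simp, by simp, hSa, by simp [hrem]⟩
  · obtain ⟨e, he⟩ := Finset.nonempty_iff_ne_empty.mpr hrem
    have heB : e ∈ B := (Finset.mem_sdiff.mp he).1
    have heS : e ∉ S := (Finset.mem_sdiff.mp he).2
    refine ⟨S, {e}, hSB, by simpa using he, by simp, hSa, ?_⟩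
    -- sum over remainder ≤ b
    have hins : a < ∑ x ∈ insert e S, p x := by
      by_contra hcon
      push_neg at hcon
      have : insert e S ∈ P := by
        rw [hP, Finset.mem_filter, Finset.mem_powerset]
        exact ⟨Finset.insert_subset heB hSB, hcon⟩
      have := hSmax _ this
      rw [Finset.card_insert_of_notMem heS] at this
      omega
    rw [Finset.sum_insert heS] at hins
    have hdecomp : ∑ x ∈ S, p x + (p e + ∑ x ∈ (B \ S) \ {e}, p x) = ∑ x ∈ B, p x := by
      have h1 : ∑ x ∈ (B \ S), p x = p e + ∑ x ∈ (B \ S) \ {e}, p x := by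
        rw [Finset.sdiff_singleton_eq_erase]
        rw [← Finset.add_sum_erase _ _ he]
      rw [← h1, add_comm, Finset.sum_sdiff hSB]
    by_contra hcon
    push_neg at hcon
    have hlt : a + b < (p e + ∑ x ∈ S, p x) + ∑ x ∈ (B \ S) \ {e}, p x :=
      ENNReal.add_lt_add hins hcon
    rw [add_comm (p e)] at hlt
    rw [add_assoc, hdecomp] at hlt
    exact absurd htot (not_le.mpr hlt)








section SME
variable {𝒴 : Type} [Fintype 𝒴] (P : 𝒴 → ℝ≥0∞) (δ : ℝ)

lemma vlc_sme_set_finite :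
    {r : ℝ | ∃ W : Finset 𝒴,
      ENNReal.ofReal (1 - δ) ≤ ∑ y ∈ W, P y ∧ r = Real.logb 2 (W.card)}.Finite := by
  apply Set.Finite.subset (Set.finite_range (fun W : Finset 𝒴 => Real.logb 2 (W.card)))
  rintro r ⟨W, _, rfl⟩
  exact ⟨W, rfl⟩

lemma vlc_smoothMaxEnt_le {W₀ : Finset 𝒴}
    (h : ENNReal.ofReal (1 - δ) ≤ ∑ y ∈ W₀, P y) :
    smoothMaxEnt P δ ≤ Real.logb 2 (W₀.card) :=
  csInf_le (vlc_sme_set_finite P δ).bddBelow ⟨W₀, h, rfl⟩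

lemma vlc_smoothMaxEnt_witness
    (hne : ENNReal.ofReal (1 - δ) ≤ ∑ y : 𝒴, P y) :
    ∃ W₀ : Finset 𝒴, ENNReal.ofReal (1 - δ) ≤ ∑ y ∈ W₀, P y ∧
      smoothMaxEnt P δ = Real.logb 2 (W₀.card) := by
  have hmem := Set.Nonempty.csInf_mem (s := {r : ℝ | ∃ W : Finset 𝒴,
      ENNReal.ofReal (1 - δ) ≤ ∑ y ∈ W, P y ∧ r = Real.logb 2 (W.card)})
    ⟨Real.logb 2 ((Finset.univ : Finset 𝒴).card), ⟨Finset.univ, hne, rfl⟩⟩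
    (vlc_sme_set_finite P δ)
  obtain ⟨W₀, h1, h2⟩ := hmem
  exact ⟨W₀, h1, h2⟩

end SME

lemma vlc_Gq_le {𝒳 𝒴 : Type} [Fintype 𝒳] [Fintype 𝒴] (pX : 𝒳 → ℝ≥0∞) (d : 𝒳 → 𝒴 → ℝ)
    (D ε δ : ℝ) (W : 𝒳 → 𝒴 → ℝ≥0∞) (hch : IsChannel W)
    (hex : chExcess pX W d D ≤ ENNReal.ofReal ε) :
    Gq pX d D ε δ ≤ ENNReal.ofReal (smoothMaxEnt (marginal pX W) δ) := by
  rw [Gq]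
  exact iInf_le_of_le W (iInf_le_of_le hch (iInf_le _ hex))

lemma vlc_exists_channel_of_Gq_lt {𝒳 𝒴 : Type} [Fintype 𝒳] [Fintype 𝒴]
    (pX : 𝒳 → ℝ≥0∞) (d : 𝒳 → 𝒴 → ℝ) (D ε δ : ℝ) (c : ℝ≥0∞)
    (h : Gq pX d D ε δ < c) :
    ∃ W : 𝒳 → 𝒴 → ℝ≥0∞, IsChannel W ∧ chExcess pX W d D ≤ ENNReal.ofReal ε ∧
      ENNReal.ofReal (smoothMaxEnt (marginal pX W) δ) < c := by
  rw [Gq] at h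
  simp only [iInf_lt_iff] at h
  obtain ⟨W, hch, hex, hlt⟩ := h
  exact ⟨W, hch, hex, hlt⟩




lemma vlc_converse {𝒳 𝒴 : Type} [Fintype 𝒳] [Fintype 𝒴]
    (p : 𝒳 → ℝ≥0∞) (hp : ∑ x, p x = 1) (d : 𝒳 → 𝒴 → ℝ) (Dr Rr ε δ : ℝ)
    (hδ1 : 0 ≤ δ) (hδ2 : δ < 1) (hRr : 0 ≤ Rr)
    (f : 𝒳 → List Bool → ℝ≥0∞) (g : List Bool → 𝒴)
    (hcode : IsCode p d Dr Rr ε δ f g) :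
    (Gq p d Dr ε δ).toReal < (⌊Rr⌋₊ : ℝ) + 1 := by
  classical
  set j := ⌊Rr⌋₊ with hj
  set Wch : 𝒳 → 𝒴 → ℝ≥0∞ := fun x y => ∑' w : List Bool, if g w = y then f x w else 0
    with hWch
  have hch : IsChannel Wch := by
    intro x
    have hm := vlc_master g (fun _ => True) 1 (f x)
    simp only [if_true, one_mul] at hm
    exact hm.trans (hcode.1 x)
  have hex : chExcess p Wch d Dr ≤ ENNReal.ofReal ε := by
    have heq : chExcess p Wch d Dr
        = ∑ x, ∑' w : List Bool, (if Dr < d x (g w) then p x * f x w else 0) := by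
      rw [chExcess]
      exact Finset.sum_congr rfl fun x _ => vlc_master g (fun y => Dr < d x y) (p x) (f x)
    rw [heq]; exact hcode.2.1
  set W₀ : Finset 𝒴 :=
    Finset.univ.filter (fun y => ∃ w : List Bool, (w.length : ℝ) ≤ Rr ∧ g w = y) with hW₀
  have hmarg : ∀ x, ∑ y ∈ W₀, (p x * Wch x y)
      = ∑' w : List Bool, (if g w ∈ W₀ then p x * f x w else 0) := by
    intro x
    have hm := vlc_master g (fun y => y ∈ W₀) (p x) (f x)
    rw [Finset.sum_ite_mem, Finset.univ_inter] at hm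
    exact hm
  have hSin : ENNReal.ofReal (1 - δ) ≤ ∑ y ∈ W₀, marginal p Wch y := by
    have hQ : ∑ y ∈ W₀, marginal p Wch y
        = ∑ x, ∑' w : List Bool, (if g w ∈ W₀ then p x * f x w else 0) := by
      simp only [marginal]
      rw [Finset.sum_comm]
      exact Finset.sum_congr rfl fun x _ => hmarg x
    set Sin := ∑ x, ∑' w : List Bool, (if g w ∈ W₀ then p x * f x w else 0) with hSin'
    set Sout := ∑ x, ∑' w : List Bool, (if g w ∉ W₀ then p x * f x w else 0) with hSout'
    have hsum : Sin + Sout = 1 := by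
      rw [hSin', hSout', ← Finset.sum_add_distrib]
      rw [← hp]
      refine Finset.sum_congr rfl fun x _ => ?_
      rw [← ENNReal.tsum_add]
      have : ∀ w : List Bool, ((if g w ∈ W₀ then p x * f x w else 0)
          + (if g w ∉ W₀ then p x * f x w else 0)) = p x * f x w := by
        intro w; by_cases hw : g w ∈ W₀ <;> simp [hw]
      rw [tsum_congr this, ENNReal.tsum_mul_left, hcode.1 x, mul_one]
    have hSout : Sout ≤ ENNReal.ofReal δ := by
      refine le_trans ?_ hcode.2.2
      refine Finset.sum_le_sum fun x _ =>
        Summable.tsum_le_tsum (fun w => ?_) ENNReal.summable ENNReal.summable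
      by_cases hw : g w ∈ W₀
      · simp [hw]
      · have hlen : Rr < (w.length : ℝ) := by
          by_contra hc; push_neg at hc
          exact hw (Finset.mem_filter.mpr ⟨Finset.mem_univ _, ⟨w, hc, rfl⟩⟩)
        simp [hw, hlen]
    have h1 : ENNReal.ofReal (1 - δ) + ENNReal.ofReal δ = 1 := by
      rw [← ENNReal.ofReal_add (by linarith) hδ1]; norm_num
    rw [hQ]
    have h2 : (1:ℝ≥0∞) ≤ Sin + ENNReal.ofReal δ := by
      rw [← hsum]; exact add_le_add_right hSout Sin
    calc ENNReal.ofReal (1-δ) = 1 - ENNReal.ofReal δ := by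
          rw [← h1, ENNReal.add_sub_cancel_right ENNReal.ofReal_ne_top]
      _ ≤ Sin := tsub_le_iff_right.mpr h2
  -- cardinality bound on W₀
  have hcard : W₀.card ≤ 2 ^ (j + 1) - 1 := by
    set ψ : 𝒴 → ℕ := fun y =>
      if h : ∃ w : List Bool, (w.length : ℝ) ≤ Rr ∧ g w = y then vlcListNum h.choose - 1
      else 0 with hψ
    have hmaps : ∀ y ∈ W₀, ψ y ∈ Finset.range (2 ^ (j + 1) - 1) := by
      intro y hy
      have h := (Finset.mem_filter.mp hy).2
      rw [hψ]; simp only [dif_pos h]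
      obtain ⟨hw1, hw2⟩ := h.choose_spec
      have hl : h.choose.length ≤ j := Nat.le_floor hw1
      have h2 : vlcListNum h.choose < 2 ^ (j + 1) :=
        lt_of_lt_of_le (vlcListNum_lt _) (Nat.pow_le_pow_right (by norm_num) (by omega))
      have h3 := vlcListNum_pos h.choose
      rw [Finset.mem_range]; omega
    have hinj : Set.InjOn ψ W₀ := by
      intro y₁ hy₁ y₂ hy₂ heq
      have h₁ := (Finset.mem_filter.mp hy₁).2
      have h₂ := (Finset.mem_filter.mp hy₂).2
      rw [hψ] at heq; simp only [dif_pos h₁, dif_pos h₂] at heq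
      have e1 := vlcListNum_pos h₁.choose
      have e2 := vlcListNum_pos h₂.choose
      have : vlcListNum h₁.choose = vlcListNum h₂.choose := by omega
      have := vlcListNum_inj this
      rw [← h₁.choose_spec.2, ← h₂.choose_spec.2, this]
    have := Finset.card_le_card_of_injOn ψ hmaps hinj
    simpa using this
  have hpos : (1:ℝ) ≤ ((2 ^ (j + 1) - 1 : ℕ) : ℝ) := by
    have : (2:ℕ) ≤ 2 ^ (j + 1) := by
      calc (2:ℕ) = 2 ^ 1 := rfl
        _ ≤ 2 ^ (j + 1) := Nat.pow_le_pow_right (by norm_num) (by omega)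
    exact_mod_cast by omega
  have hsme : smoothMaxEnt (marginal p Wch) δ ≤ Real.logb 2 ((2 ^ (j + 1) - 1 : ℕ)) := by
    refine le_trans (vlc_smoothMaxEnt_le _ _ hSin) ?_
    by_cases hc : W₀.card = 0
    · rw [hc]
      simpa using Real.logb_nonneg (by norm_num) hpos
    · refine Real.logb_le_logb_of_le (by norm_num) ?_ ?_
      · exact_mod_cast Nat.pos_of_ne_zero hc
      · exact_mod_cast hcard
  have hG1 : Gq p d Dr ε δ ≤ ENNReal.ofReal (Real.logb 2 ((2 ^ (j + 1) - 1 : ℕ))) :=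
    le_trans (vlc_Gq_le p d Dr ε δ Wch hch hex) (ENNReal.ofReal_le_ofReal hsme)
  have hlt : Real.logb 2 ((2 ^ (j + 1) - 1 : ℕ)) < (j : ℝ) + 1 := by
    have h2 : ((2 ^ (j + 1) - 1 : ℕ) : ℝ) < (2:ℝ) ^ (j + 1) := by
      have : ((2 ^ (j + 1) - 1 : ℕ) : ℝ) = (2:ℝ) ^ (j + 1) - 1 := by
        push_cast [Nat.cast_sub (Nat.one_le_two_pow)]; norm_num
      rw [this]; linarith
    calc Real.logb 2 ((2 ^ (j + 1) - 1 : ℕ))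
        < Real.logb 2 ((2:ℝ) ^ (j + 1)) := Real.logb_lt_logb (by norm_num) (by linarith) h2
      _ = (j : ℝ) + 1 := by
          rw [Real.logb_pow]
          simp [Real.logb_self_eq_one]
  have htr := ENNReal.toReal_mono ENNReal.ofReal_ne_top hG1
  rw [ENNReal.toReal_ofReal (Real.logb_nonneg (by norm_num) hpos)] at htr
  linarith


lemma vlc_achieve {𝒳 𝒴 : Type} [Fintype 𝒳] [Fintype 𝒴] [Nonempty 𝒴]
    (p : 𝒳 → ℝ≥0∞) (hp : ∑ x, p x = 1) (d : 𝒳 → 𝒴 → ℝ) (Dr ε δ : ℝ)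
    (hδ1 : 0 ≤ δ) (hδ2 : δ < 1)
    (hG : Gq p d Dr ε δ ≠ ⊤) (Rr : ℝ) (hRr : (Gq p d Dr ε δ).toReal + 3 ≤ Rr) :
    ∃ (fe : 𝒳 → List Bool) (g : List Bool → 𝒴), IsCode p d Dr Rr ε δ (detEnc fe) g := by
  classical
  set G := Gq p d Dr ε δ with hGdef
  have hlt : G < G + 1 := ENNReal.lt_add_right hG one_ne_zero
  obtain ⟨W, hch, hex, hsme⟩ := vlc_exists_channel_of_Gq_lt p d Dr ε δ (G + 1) hlt
  set Q := marginal p W with hQ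
  have hQtot : ∑ y : 𝒴, Q y = 1 := by
    rw [hQ]; simp only [marginal]
    rw [Finset.sum_comm]
    calc ∑ x, ∑ y, p x * W x y = ∑ x, p x * ∑ y, W x y :=
          Finset.sum_congr rfl fun x _ => (Finset.mul_sum _ _ _).symm
      _ = 1 := by
          rw [← hp]; exact Finset.sum_congr rfl fun x _ => by rw [hch x, mul_one]
  obtain ⟨W₀, hW₀m, hW₀c⟩ := vlc_smoothMaxEnt_witness Q δ (by
    rw [hQtot]
    calc ENNReal.ofReal (1 - δ) ≤ ENNReal.ofReal 1 := ENNReal.ofReal_le_ofReal (by linarith)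
      _ = 1 := ENNReal.ofReal_one)
  have hsme2 : Real.logb 2 (W₀.card) ≤ G.toReal + 1 := by
    rw [← hW₀c]
    by_cases hneg : smoothMaxEnt Q δ ≤ 0
    · have := ENNReal.toReal_nonneg (a := G); linarith
    · push_neg at hneg
      have hh : ENNReal.ofReal (smoothMaxEnt Q δ) < ENNReal.ofReal (G.toReal + 1) := by
        refine lt_of_lt_of_le hsme ?_
        rw [ENNReal.ofReal_add ENNReal.toReal_nonneg zero_le_one, ENNReal.ofReal_toReal hG,
          ENNReal.ofReal_one]
      have := (ENNReal.ofReal_lt_ofReal_iff (by positivity)).mp hh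
      linarith
  have hW₀pos : 0 < W₀.card := by
    rcases Nat.eq_zero_or_pos W₀.card with hc | hc
    · exfalso
      rw [Finset.card_eq_zero] at hc
      rw [hc] at hW₀m
      simp only [Finset.sum_empty] at hW₀m
      have hpos0 := ENNReal.ofReal_pos.mpr (show (0:ℝ) < 1 - δ by linarith)
      exact absurd (le_antisymm hW₀m (by positivity)) hpos0.ne'
    · exact hc
  obtain ⟨w₀, hw₀⟩ := Finset.card_pos.mp hW₀pos
  -- distortion balls
  set A : 𝒳 → Finset 𝒴 := fun x => Finset.univ.filter (fun y => ¬ Dr < d x y) with hA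
  set Ac : 𝒳 → Finset 𝒴 := fun x => Finset.univ.filter (fun y => Dr < d x y) with hAc
  have hexcess : chExcess p W d Dr = ∑ x, p x * ∑ y ∈ Ac x, W x y := by
    rw [chExcess]
    refine Finset.sum_congr rfl fun x _ => ?_
    rw [hAc]; simp only
    rw [Finset.sum_filter, Finset.mul_sum]
    exact Finset.sum_congr rfl fun y _ => by by_cases hy : Dr < d x y <;> simp [hy]
  set Bz : Finset 𝒳 := Finset.univ.filter (fun x => A x = ∅) with hBz
  set B1 : Finset 𝒳 := Finset.univ.filter (fun x => (A x ∩ W₀ = ∅) ∧ A x ≠ ∅) with hB1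
  have hBzEx : ∀ x ∈ Bz, p x = p x * ∑ y ∈ Ac x, W x y := by
    intro x hx
    have hAx : A x = ∅ := (Finset.mem_filter.mp hx).2
    have hAcU : Ac x = Finset.univ := by
      rw [hAc]
      refine Finset.filter_true_of_mem fun y _ => ?_
      by_contra hy
      have : y ∈ A x := by
        rw [hA]; simp only [Finset.mem_filter, Finset.mem_univ, true_and]; exact hy
      rw [hAx] at this; simp at this
    rw [hAcU, hch x, mul_one]
  have hBzbound : ∑ x ∈ Bz, p x ≤ ENNReal.ofReal ε := by
    calc ∑ x ∈ Bz, p x = ∑ x ∈ Bz, p x * ∑ y ∈ Ac x, W x y := Finset.sum_congr rfl hBzEx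
      _ ≤ ∑ x, p x * ∑ y ∈ Ac x, W x y :=
          Finset.sum_le_sum_of_subset (Finset.subset_univ _)
      _ = chExcess p W d Dr := hexcess.symm
      _ ≤ ENNReal.ofReal ε := hex
  have h1δ : ENNReal.ofReal (1 - δ) + ENNReal.ofReal δ = 1 := by
    rw [← ENNReal.ofReal_add (by linarith) hδ1]; norm_num
  have hQc : ∑ y ∈ W₀ᶜ, Q y ≤ ENNReal.ofReal δ := by
    have hsplit : ∑ y ∈ W₀, Q y + ∑ y ∈ W₀ᶜ, Q y = 1 := by
      rw [Finset.sum_add_sum_compl, hQtot]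
    have hfin : ∑ y ∈ W₀, Q y ≠ ⊤ := by
      intro h; rw [h] at hsplit; simp at hsplit
    have hb : ∑ y ∈ W₀ᶜ, Q y = 1 - ∑ y ∈ W₀, Q y :=
      ENNReal.eq_sub_of_add_eq hfin (by rw [add_comm]; exact hsplit)
    rw [hb]
    calc 1 - ∑ y ∈ W₀, Q y ≤ 1 - ENNReal.ofReal (1 - δ) := tsub_le_tsub_left hW₀m 1
      _ = ENNReal.ofReal δ := by
          rw [← h1δ, add_comm, ENNReal.add_sub_cancel_right ENNReal.ofReal_ne_top]
  have hB1x : ∀ x ∈ B1, p x ≤ p x * ∑ y ∈ Ac x, W x y + p x * ∑ y ∈ W₀ᶜ, W x y := by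
    intro x hx
    obtain ⟨hint, hne⟩ := (Finset.mem_filter.mp hx).2
    have hsub : (Finset.univ : Finset 𝒴) ⊆ Ac x ∪ W₀ᶜ := by
      intro y _
      by_cases hy : Dr < d x y
      · exact Finset.mem_union_left _ (by rw [hAc]; simp [hy])
      · refine Finset.mem_union_right _ ?_
        rw [Finset.mem_compl]
        intro hyW
        have hyA : y ∈ A x := by
          rw [hA]; simp only [Finset.mem_filter, Finset.mem_univ, true_and]; exact hy
        have hmem : y ∈ A x ∩ W₀ := Finset.mem_inter.mpr ⟨hyA, hyW⟩
        rw [hint] at hmem; simp at hmem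
    calc p x = p x * ∑ y, W x y := by rw [hch x, mul_one]
      _ ≤ p x * (∑ y ∈ Ac x, W x y + ∑ y ∈ W₀ᶜ, W x y) := by
          refine mul_le_mul_right ?_ (p x)
          refine le_trans (Finset.sum_le_sum_of_subset hsub) ?_
          rw [← Finset.sum_union_inter]
          exact le_self_add
      _ = _ := by rw [mul_add]
  have hdisjB : Disjoint B1 Bz := by
    rw [Finset.disjoint_left]
    intro x hx1 hxz
    exact ((Finset.mem_filter.mp hx1).2.2) ((Finset.mem_filter.mp hxz).2)
  have hBzfin : ∑ x ∈ Bz, p x ≠ ⊤ := (lt_of_le_of_lt hBzbound ENNReal.ofReal_lt_top).ne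
  have hExB1 : ∑ x ∈ B1, p x * ∑ y ∈ Ac x, W x y ≤ ENNReal.ofReal ε - ∑ x ∈ Bz, p x := by
    refine (ENNReal.cancel_of_ne hBzfin).le_tsub_of_add_le_right ?_
    calc ∑ x ∈ B1, p x * ∑ y ∈ Ac x, W x y + ∑ x ∈ Bz, p x
        = ∑ x ∈ B1, p x * ∑ y ∈ Ac x, W x y + ∑ x ∈ Bz, p x * ∑ y ∈ Ac x, W x y := by
          rw [Finset.sum_congr rfl hBzEx]
      _ = ∑ x ∈ B1 ∪ Bz, p x * ∑ y ∈ Ac x, W x y := (Finset.sum_union hdisjB).symm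
      _ ≤ ∑ x, p x * ∑ y ∈ Ac x, W x y :=
          Finset.sum_le_sum_of_subset (Finset.subset_univ _)
      _ = chExcess p W d Dr := hexcess.symm
      _ ≤ ENNReal.ofReal ε := hex
  have hW₀cB1 : ∑ x ∈ B1, p x * ∑ y ∈ W₀ᶜ, W x y ≤ ENNReal.ofReal δ := by
    calc ∑ x ∈ B1, p x * ∑ y ∈ W₀ᶜ, W x y ≤ ∑ x, p x * ∑ y ∈ W₀ᶜ, W x y :=
          Finset.sum_le_sum_of_subset (Finset.subset_univ _)
      _ = ∑ y ∈ W₀ᶜ, Q y := by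
          rw [hQ]; simp only [marginal]
          rw [← Finset.sum_comm]
          exact Finset.sum_congr rfl fun x _ => Finset.mul_sum _ _ _
      _ ≤ ENNReal.ofReal δ := hQc
  have hB1tot : ∑ x ∈ B1, p x ≤ (ENNReal.ofReal ε - ∑ x ∈ Bz, p x) + ENNReal.ofReal δ := by
    calc ∑ x ∈ B1, p x
        ≤ ∑ x ∈ B1, (p x * ∑ y ∈ Ac x, W x y + p x * ∑ y ∈ W₀ᶜ, W x y) :=
          Finset.sum_le_sum hB1x
      _ = ∑ x ∈ B1, p x * ∑ y ∈ Ac x, W x y + ∑ x ∈ B1, p x * ∑ y ∈ W₀ᶜ, W x y :=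
          Finset.sum_add_distrib
      _ ≤ _ := add_le_add hExB1 hW₀cB1
  obtain ⟨S, E, hSB1, hEB1, hEcard, hSbound, hRem⟩ := vlc_split B1 p _ _ hB1tot
  -- the reproduction map
  set φ : 𝒳 → 𝒴 := fun x =>
    if h1 : (A x ∩ W₀).Nonempty then h1.choose
    else if x ∈ S ∨ A x = ∅ then w₀
    else if h2 : (A x).Nonempty then h2.choose else w₀
    with hφ
  have hφ_dist : ∀ x, x ∉ S → A x ≠ ∅ → φ x ∈ A x := by
    intro x hxS hxA
    have hφx : φ x = if h1 : (A x ∩ W₀).Nonempty then h1.choose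
        else if x ∈ S ∨ A x = ∅ then w₀
        else if h2 : (A x).Nonempty then h2.choose else w₀ := rfl
    rw [hφx]
    by_cases h1 : (A x ∩ W₀).Nonempty
    · rw [dif_pos h1]; exact Finset.mem_of_mem_inter_left h1.choose_spec
    · rw [dif_neg h1, if_neg (by simp [hxS, hxA])]
      have h2 : (A x).Nonempty := Finset.nonempty_iff_ne_empty.mpr hxA
      rw [dif_pos h2]
      exact h2.choose_spec
  set T : Finset 𝒴 := W₀ ∪ E.image φ with hT
  have hφ_T : ∀ x, φ x ∉ T → (x ∈ (B1 \ S) \ E) := by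
    intro x hxT
    have hφx : φ x = if h1 : (A x ∩ W₀).Nonempty then h1.choose
        else if x ∈ S ∨ A x = ∅ then w₀
        else if h2 : (A x).Nonempty then h2.choose else w₀ := rfl
    by_cases h1 : (A x ∩ W₀).Nonempty
    · exfalso
      refine hxT (Finset.mem_union_left _ ?_)
      rw [hφx, dif_pos h1]
      exact Finset.mem_of_mem_inter_right h1.choose_spec
    by_cases h2 : x ∈ S ∨ A x = ∅
    · exfalso
      refine hxT (Finset.mem_union_left _ ?_)
      rw [hφx, dif_neg h1, if_pos h2]
      exact hw₀
    by_cases hE : x ∈ E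
    · exact absurd (Finset.mem_union_right _ (Finset.mem_image_of_mem φ hE)) hxT
    · push_neg at h2
      refine Finset.mem_sdiff.mpr ⟨Finset.mem_sdiff.mpr ⟨?_, h2.1⟩, hE⟩
      rw [hB1]
      refine Finset.mem_filter.mpr ⟨Finset.mem_univ _, ⟨?_, Finset.nonempty_iff_ne_empty.mp h2.2⟩⟩
      exact Finset.not_nonempty_iff_eq_empty.mp h1
  have hφ_good : ∀ x, Dr < d x (φ x) → x ∈ S ∪ Bz := by
    intro x hx
    by_cases hxS : x ∈ S
    · exact Finset.mem_union_left _ hxS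
    by_cases hxA : A x = ∅
    · exact Finset.mem_union_right _
        (by rw [hBz]; exact Finset.mem_filter.mpr ⟨Finset.mem_univ _, hxA⟩)
    · exfalso
      have hmem := hφ_dist x hxS hxA
      rw [hA] at hmem
      exact (Finset.mem_filter.mp hmem).2 hx
  have hSBz : ∑ x ∈ S ∪ Bz, p x ≤ ENNReal.ofReal ε := by
    have hdisj : Disjoint S Bz := by
      rw [Finset.disjoint_left]
      intro x hxS hxz
      exact (Finset.disjoint_left.mp hdisjB) (hSB1 hxS) hxz
    rw [Finset.sum_union hdisj]
    calc ∑ x ∈ S, p x + ∑ x ∈ Bz, p x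
        ≤ (ENNReal.ofReal ε - ∑ x ∈ Bz, p x) + ∑ x ∈ Bz, p x :=
          add_le_add_left hSbound _
      _ = ENNReal.ofReal ε := tsub_add_cancel_of_le hBzbound
  have hTcard : T.card ≤ W₀.card + 1 := by
    calc T.card ≤ W₀.card + (E.image φ).card := Finset.card_union_le _ _
      _ ≤ W₀.card + 1 := by
          have h1 := Finset.card_image_le (s := E) (f := φ)
          omega
  -- length parameters
  set k := Nat.clog 2 (W₀.card + 1) with hk
  have hk1 : 1 ≤ k := by
    rw [hk]; exact Nat.clog_pos (by norm_num) (by omega)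
  have hkpow : W₀.card + 1 ≤ 2 ^ k := Nat.le_pow_clog (by norm_num) _
  have hkreal : (k : ℝ) ≤ G.toReal + 2 := by
    have h2 : 2 ^ (k - 1) < W₀.card + 1 := by
      rw [hk]; exact Nat.pow_pred_clog_lt_self (by norm_num) (by omega)
    have h3 : (2:ℝ) ^ ((k - 1 : ℕ)) ≤ (W₀.card : ℝ) := by
      exact_mod_cast Nat.lt_succ_iff.mp h2
    have h4 : ((k - 1 : ℕ) : ℝ) ≤ Real.logb 2 (W₀.card) := by
      calc ((k - 1 : ℕ) : ℝ) = Real.logb 2 ((2:ℝ) ^ ((k - 1 : ℕ))) := by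
            rw [Real.logb_pow, Real.logb_self_eq_one (by norm_num)]; ring
        _ ≤ Real.logb 2 (W₀.card) :=
            Real.logb_le_logb_of_le (by norm_num) (by positivity) h3
    have h5 : ((k - 1 : ℕ) : ℝ) = (k : ℝ) - 1 := by
      push_cast [Nat.cast_sub hk1]; ring
    linarith
  set K := k + 1 + Fintype.card 𝒴 with hK
  have hKpow : Fintype.card 𝒴 < 2 ^ K :=
    lt_of_lt_of_le Nat.lt_two_pow_self (Nat.pow_le_pow_right (by norm_num) (by omega))
  have hkK : k < K := by omega
  have hTcard2 : T.card ≤ 2 ^ k := le_trans hTcard hkpow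
  -- the encoding
  set eA := Fintype.equivFin 𝒴 with heA
  set c : 𝒴 → List Bool := fun y =>
    if h : y ∈ T then vlcNatToList k (T.equivFin ⟨y, h⟩) else vlcNatToList K (eA y)
    with hc'
  have hclen : ∀ y, (c y).length = if y ∈ T then k else K := by
    intro y
    rw [hc']
    by_cases h : y ∈ T <;> simp [h, vlcNatToList_length]
  have hcinj : Function.Injective c := by
    intro y₁ y₂ h
    have hlen : (if y₁ ∈ T then k else K) = (if y₂ ∈ T then k else K) := by
      rw [← hclen y₁, ← hclen y₂, h]
    by_cases h1 : y₁ ∈ T <;> by_cases h2 : y₂ ∈ T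
    · rw [hc'] at h
      simp only [dif_pos h1, dif_pos h2] at h
      have hv := vlcNatToList_inj k _ _
        (lt_of_lt_of_le (Fin.is_lt _) hTcard2) (lt_of_lt_of_le (Fin.is_lt _) hTcard2) h
      have hsub : (⟨y₁, h1⟩ : {y // y ∈ T}) = ⟨y₂, h2⟩ :=
        T.equivFin.injective (Fin.ext hv)
      exact congrArg Subtype.val hsub
    · simp only [if_pos h1, if_neg h2] at hlen; omega
    · simp only [if_neg h1, if_pos h2] at hlen; omega
    · rw [hc'] at h
      simp only [dif_neg h1, dif_neg h2] at h
      have hv := vlcNatToList_inj K _ _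
        (lt_trans (Fin.is_lt _) hKpow) (lt_trans (Fin.is_lt _) hKpow) h
      exact eA.injective (Fin.ext hv)
  set g : List Bool → 𝒴 := fun w =>
    if h : ∃ y, c y = w then h.choose else Classical.arbitrary 𝒴 with hg
  have hgc : ∀ y, g (c y) = y := by
    intro y
    have hex' : ∃ y', c y' = c y := ⟨y, rfl⟩
    have hgy : g (c y) = hex'.choose := by rw [hg]; simp only [dif_pos hex']
    rw [hgy]
    exact hcinj hex'.choose_spec
  set fe : 𝒳 → List Bool := fun x => c (φ x) with hfe
  refine ⟨fe, g, fun x => vlc_tsum_detEnc fe x, ?_, ?_⟩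
  · -- excess distortion
    calc ∑ x, ∑' w : List Bool, (if Dr < d x (g w) then p x * detEnc fe x w else 0)
        = ∑ x, (if Dr < d x (φ x) then p x else 0) := by
          refine Finset.sum_congr rfl fun x _ => ?_
          rw [vlc_tsum_detEnc_ite fe x (fun w => Dr < d x (g w)) (p x)]
          have : g (fe x) = φ x := hgc (φ x)
          rw [this]
      _ ≤ ∑ x, (if x ∈ S ∪ Bz then p x else 0) := by
          refine Finset.sum_le_sum fun x _ => ?_
          by_cases hx : Dr < d x (φ x)
          · simp [hx, hφ_good x hx]
          · simp [hx]
      _ = ∑ x ∈ S ∪ Bz, p x := by rw [Finset.sum_ite_mem, Finset.univ_inter]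
      _ ≤ ENNReal.ofReal ε := hSBz
  · -- overflow
    calc ∑ x, ∑' w : List Bool, (if Rr < (w.length : ℝ) then p x * detEnc fe x w else 0)
        = ∑ x, (if Rr < ((fe x).length : ℝ) then p x else 0) := by
          refine Finset.sum_congr rfl fun x _ => ?_
          rw [vlc_tsum_detEnc_ite fe x (fun w => Rr < (w.length : ℝ)) (p x)]
      _ ≤ ∑ x, (if x ∈ (B1 \ S) \ E then p x else 0) := by
          refine Finset.sum_le_sum fun x _ => ?_
          by_cases hx : Rr < ((fe x).length : ℝ)
          · have hxT : φ x ∉ T := by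
              intro hT'
              have hlenx : (fe x).length = if φ x ∈ T then k else K := hclen (φ x)
              rw [hlenx, if_pos hT'] at hx
              have hGnn := ENNReal.toReal_nonneg (a := G)
              have : (k : ℝ) ≤ Rr := by linarith
              exact absurd hx (not_lt.mpr this)
            simp [hx, hφ_T x hxT]
          · simp [hx]
      _ = ∑ x ∈ (B1 \ S) \ E, p x := by rw [Finset.sum_ite_mem, Finset.univ_inter]
      _ ≤ ENNReal.ofReal δ := hRem


/-- General coding theorem at blocklength `n`: if `G^δ_{D,ε}(X^n) < ∞`, then
`(G^δ_{D,ε}(X^n) - 1)/n < R*(n,D,ε,δ) ≤ R̃(n,D,ε,δ) ≤ (G^δ_{D,ε}(X^n) + 3)/n`.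
Here an `(n,D,R,ε,δ)` code is a code for the source `X^n` with distortion threshold
`n·D` and length threshold `n·R`. -/
theorem stmt6 {𝒳 𝒴 : Type} [Fintype 𝒳] [Fintype 𝒴] [Nonempty 𝒳] [Nonempty 𝒴]
    (n : ℕ) (hn : 0 < n)
    (pXn : (Fin n → 𝒳) → ℝ≥0∞) (hpXn : ∑ x, pXn x = 1)
    (dn : (Fin n → 𝒳) → (Fin n → 𝒴) → ℝ) (hd : ∀ x y, 0 ≤ dn x y)
    (D ε δ : ℝ) (hD : 0 ≤ D) (hε : 0 ≤ ε ∧ ε < 1) (hδ : 0 ≤ δ ∧ δ < 1)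
    (hG : Gq pXn dn ((n : ℝ) * D) ε δ ≠ ⊤) :
    ((Gq pXn dn ((n : ℝ) * D) ε δ).toReal - 1) / n <
        sInf {R : ℝ | 0 ≤ R ∧ ∃ (f : (Fin n → 𝒳) → List Bool → ℝ≥0∞)
          (g : List Bool → (Fin n → 𝒴)),
          IsCode pXn dn ((n : ℝ) * D) ((n : ℝ) * R) ε δ f g} ∧
      sInf {R : ℝ | 0 ≤ R ∧ ∃ (f : (Fin n → 𝒳) → List Bool → ℝ≥0∞)
          (g : List Bool → (Fin n → 𝒴)),
          IsCode pXn dn ((n : ℝ) * D) ((n : ℝ) * R) ε δ f g}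
        ≤ sInf {R : ℝ | 0 ≤ R ∧ ∃ (f : (Fin n → 𝒳) → List Bool)
          (g : List Bool → (Fin n → 𝒴)),
          IsCode pXn dn ((n : ℝ) * D) ((n : ℝ) * R) ε δ (detEnc f) g} ∧
      sInf {R : ℝ | 0 ≤ R ∧ ∃ (f : (Fin n → 𝒳) → List Bool)
          (g : List Bool → (Fin n → 𝒴)),
          IsCode pXn dn ((n : ℝ) * D) ((n : ℝ) * R) ε δ (detEnc f) g}
        ≤ ((Gq pXn dn ((n : ℝ) * D) ε δ).toReal + 3) / n := by
  classical
  set G := Gq pXn dn ((n : ℝ) * D) ε δ with hGdef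
  have hGnn : 0 ≤ G.toReal := ENNReal.toReal_nonneg
  have hn' : (0:ℝ) < (n:ℝ) := by exact_mod_cast hn
  set Sst := {R : ℝ | 0 ≤ R ∧ ∃ (f : (Fin n → 𝒳) → List Bool → ℝ≥0∞)
      (g : List Bool → (Fin n → 𝒴)),
      IsCode pXn dn ((n : ℝ) * D) ((n : ℝ) * R) ε δ f g} with hSst
  set Sdet := {R : ℝ | 0 ≤ R ∧ ∃ (f : (Fin n → 𝒳) → List Bool)
      (g : List Bool → (Fin n → 𝒴)),
      IsCode pXn dn ((n : ℝ) * D) ((n : ℝ) * R) ε δ (detEnc f) g} with hSdet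
  set R₀ : ℝ := (G.toReal + 3) / n with hR₀
  have hnR₀ : (n:ℝ) * R₀ = G.toReal + 3 := by
    rw [hR₀]; field_simp
  obtain ⟨fe, g, hcode⟩ := vlc_achieve pXn hpXn dn ((n : ℝ) * D) ε δ hδ.1 hδ.2 hG
    ((n:ℝ) * R₀) (by rw [hnR₀])
  have hR₀mem : R₀ ∈ Sdet := by
    refine ⟨?_, fe, g, hcode⟩
    rw [hR₀]
    exact div_nonneg (by linarith) (le_of_lt hn')
  have hsub : Sdet ⊆ Sst := by
    rintro R ⟨hR0, fe', g', hc⟩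
    exact ⟨hR0, detEnc fe', g', hc⟩
  have hbdd_st : BddBelow Sst := ⟨0, fun R hR => hR.1⟩
  have hbdd_det : BddBelow Sdet := ⟨0, fun R hR => hR.1⟩
  have hne_st : Sst.Nonempty := ⟨R₀, hsub hR₀mem⟩
  refine ⟨?_, csInf_le_csInf hbdd_st ⟨R₀, hR₀mem⟩ hsub, csInf_le hbdd_det hR₀mem⟩
  -- converse part
  set cInt : ℤ := ⌊G.toReal - 1⌋ + 1 with hcInt
  have hlb : ∀ R ∈ Sst, (cInt:ℝ)/(n:ℝ) ≤ R := by
    rintro R ⟨hR0, f, g', hc⟩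
    have hnR : 0 ≤ (n:ℝ) * R := mul_nonneg (le_of_lt hn') hR0
    have hconv := vlc_converse pXn hpXn dn ((n : ℝ) * D) ((n:ℝ)*R) ε δ hδ.1 hδ.2 hnR f g' hc
    have h1 : G.toReal - 1 < (⌊(n:ℝ)*R⌋₊ : ℝ) := by
      rw [hGdef]; linarith
    have h2 : (cInt:ℝ) ≤ ((⌊(n:ℝ)*R⌋₊ : ℕ) : ℝ) := by
      have hz : ⌊G.toReal - 1⌋ < ((⌊(n:ℝ)*R⌋₊ : ℕ) : ℤ) :=
        Int.floor_lt.mpr (by exact_mod_cast h1)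
      have : cInt ≤ ((⌊(n:ℝ)*R⌋₊ : ℕ) : ℤ) := by omega
      exact_mod_cast this
    have h3 : ((⌊(n:ℝ)*R⌋₊ : ℕ) : ℝ) ≤ (n:ℝ)*R := Nat.floor_le hnR
    rw [div_le_iff₀ hn']
    calc (cInt:ℝ) ≤ (n:ℝ)*R := by linarith
      _ = R * (n:ℝ) := mul_comm _ _
  have h4 : (cInt:ℝ)/(n:ℝ) ≤ sInf Sst := le_csInf hne_st hlb
  have h5 : (G.toReal - 1)/(n:ℝ) < (cInt:ℝ)/(n:ℝ) := by
    have hlt : G.toReal - 1 < (cInt:ℝ) := by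
      rw [hcInt]; push_cast
      exact Int.lt_floor_add_one _
    exact div_lt_div_of_pos_right hlt hn'
  linarith


end
end

section
/- The smooth max entropy is Schur concave: let P and Q be probability distributions on a finite nonempty set 𝒴 with values arranged in decreasing order p₁ ≥ p₂ ≥ … ≥ p_m and q₁ ≥ q₂ ≥ … ≥ q_m (m = |𝒴|). If Σ_{i=1}^k p_i ≤ Σ_{i=1}^k q_i for every k = 1, …, m (i.e., Q majorizes P), then H^δ(Q) ≤ H^δ(P) for every δ ∈ [0,1). -/
open scoped ENNReal
open MeasureTheory

noncomputable section

lemma strictMono_val_le {k m : ℕ} (g : Fin k → Fin m) (hg : StrictMono g) :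
    ∀ n (h : n < k), n ≤ (g ⟨n, h⟩ : ℕ) := by
  intro n
  induction n with
  | zero => simp
  | succ j ih =>
    intro h
    have hj : j < k := by omega
    have h1 := ih hj
    have h2 : g ⟨j, hj⟩ < g ⟨j + 1, h⟩ := hg (by simp [Fin.lt_def])
    rw [Fin.lt_def] at h2
    omega

lemma filter_eq_image_castLE {m k : ℕ} (hkm : k ≤ m) :
    Finset.univ.filter (fun i : Fin m => (i : ℕ) < k)
      = Finset.image (Fin.castLE hkm) Finset.univ := by
  ext i
  rw [Finset.mem_filter, Finset.mem_image]
  constructor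
  · rintro ⟨-, hi⟩
    exact ⟨⟨i.1, hi⟩, Finset.mem_univ _, rfl⟩
  · rintro ⟨j, -, rfl⟩
    exact ⟨Finset.mem_univ _, j.2⟩

lemma card_filter_lt {m k : ℕ} (hkm : k ≤ m) :
    (Finset.univ.filter (fun i : Fin m => (i : ℕ) < k)).card = k := by
  rw [filter_eq_image_castLE hkm,
    Finset.card_image_of_injective _ (Fin.castLE_injective hkm)]
  simp

/-- Sum over any set is at most the sum over the initial segment of the same size,
for an antitone function. -/
lemma sum_le_initial {m : ℕ} (g : Fin m → ℝ≥0∞) (hg : ∀ i j : Fin m, i ≤ j → g j ≤ g i)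
    (S : Finset (Fin m)) :
    ∑ i ∈ S, g i ≤ ∑ i ∈ Finset.univ.filter (fun i : Fin m => (i : ℕ) < S.card), g i := by
  set k := S.card with hk
  have hkm : k ≤ m := by
    have := S.card_le_univ
    simpa using this
  set emb := S.orderEmbOfFin hk.symm with hemb
  have h1 : ∑ i ∈ S, g i = ∑ j : Fin k, g (emb j) := by
    rw [← Finset.sum_image (f := g) (g := fun j : Fin k => emb j)
      (by intro a _ b _ hab; exact emb.injective hab)]
    congr 1
    apply Finset.coe_injective
    rw [Finset.coe_image, Finset.coe_univ, Set.image_univ]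
    exact (Finset.range_orderEmbOfFin S hk.symm).symm
  rw [h1, filter_eq_image_castLE hkm,
    Finset.sum_image (by intro a _ b _ hab; exact Fin.castLE_injective hkm hab)]
  apply Finset.sum_le_sum
  intro j _
  apply hg
  have := strictMono_val_le (fun j : Fin k => emb j) emb.strictMono j j.2
  simpa [Fin.le_def] using this

/-- Schur concavity of the smooth max entropy: if `Q` majorizes `P` (with the values
of `P` and `Q` enumerated in decreasing order by `e` and `f`, every partial sum of
the largest values of `P` is at most that of `Q`), then `H^δ(Q) ≤ H^δ(P)` for every
`δ ∈ [0,1)`. -/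
theorem stmt11 {𝒴 : Type} [Fintype 𝒴] [Nonempty 𝒴]
    (P Q : 𝒴 → ℝ≥0∞) (hP : ∑ y, P y = 1) (hQ : ∑ y, Q y = 1)
    (e f : Fin (Fintype.card 𝒴) ≃ 𝒴)
    (hPe : ∀ i j : Fin (Fintype.card 𝒴), i ≤ j → P (e j) ≤ P (e i))
    (hQf : ∀ i j : Fin (Fintype.card 𝒴), i ≤ j → Q (f j) ≤ Q (f i))
    (hmaj : ∀ k : ℕ, 1 ≤ k → k ≤ Fintype.card 𝒴 →
      ∑ i ∈ Finset.univ.filter (fun i : Fin (Fintype.card 𝒴) => (i : ℕ) < k), P (e i)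
        ≤ ∑ i ∈ Finset.univ.filter (fun i : Fin (Fintype.card 𝒴) => (i : ℕ) < k), Q (f i))
    (δ : ℝ) (hδ : 0 ≤ δ ∧ δ < 1) :
    smoothMaxEnt Q δ ≤ smoothMaxEnt P δ := by
  classical
  obtain ⟨hδ0, hδ1⟩ := hδ
  have h0 : (0 : ℝ) < 1 - δ := by linarith
  have hPne : {r : ℝ | ∃ W : Finset 𝒴,
      ENNReal.ofReal (1 - δ) ≤ ∑ y ∈ W, P y ∧ r = Real.logb 2 (W.card)}.Nonempty := by
    refine ⟨Real.logb 2 ((Finset.univ : Finset 𝒴).card), Finset.univ, ?_, rfl⟩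
    rw [show ∑ y ∈ Finset.univ, P y = 1 from hP]
    calc ENNReal.ofReal (1 - δ) ≤ ENNReal.ofReal 1 := by
          apply ENNReal.ofReal_le_ofReal; linarith
      _ = 1 := by simp
  have hQbdd : BddBelow {r : ℝ | ∃ W : Finset 𝒴,
      ENNReal.ofReal (1 - δ) ≤ ∑ y ∈ W, Q y ∧ r = Real.logb 2 (W.card)} := by
    refine ⟨0, ?_⟩
    rintro r ⟨W, -, rfl⟩
    rcases Nat.eq_zero_or_pos W.card with h | h
    · simp [h]
    · exact Real.logb_nonneg one_lt_two (by exact_mod_cast h)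
  unfold smoothMaxEnt
  apply le_csInf hPne
  rintro r ⟨W, hW, rfl⟩
  have hpos : 0 < W.card := by
    rcases Nat.eq_zero_or_pos W.card with h | h
    · exfalso
      rw [Finset.card_eq_zero] at h
      subst h
      simp only [Finset.sum_empty, nonpos_iff_eq_zero, ENNReal.ofReal_eq_zero] at hW
      linarith
    · exact h
  have hkm : W.card ≤ Fintype.card 𝒴 := by
    have := W.card_le_univ
    simpa using this
  have h1 : ∑ y ∈ W, P y = ∑ i ∈ W.image e.symm, P (e i) := by
    rw [Finset.sum_image (by intro a _ b _ hab; exact e.symm.injective hab)]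
    simp
  have hcard1 : (W.image e.symm).card = W.card :=
    Finset.card_image_of_injective _ e.symm.injective
  have h2 := sum_le_initial (fun i => P (e i)) hPe (W.image e.symm)
  rw [hcard1] at h2
  have h3 := hmaj W.card hpos hkm
  set W' := (Finset.univ.filter
      (fun i : Fin (Fintype.card 𝒴) => (i : ℕ) < W.card)).image f with hW'
  have hcard2 : W'.card = W.card := by
    rw [hW', Finset.card_image_of_injective _ f.injective, card_filter_lt hkm]
  have h4 : ∑ i ∈ Finset.univ.filter
        (fun i : Fin (Fintype.card 𝒴) => (i : ℕ) < W.card), Q (f i)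
      = ∑ y ∈ W', Q y := by
    rw [hW', Finset.sum_image (by intro a _ b _ hab; exact f.injective hab)]
  have hQW' : ENNReal.ofReal (1 - δ) ≤ ∑ y ∈ W', Q y :=
    hW.trans (h1.le.trans (h2.trans (h3.trans h4.le)))
  have hlog : Real.logb 2 (W'.card) = Real.logb 2 (W.card) := by rw [hcard2]
  rw [← hlog]
  exact csInf_le hQbdd ⟨W', hQW', rfl⟩

end
end
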